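/- For every choice of the parameter formulas δxy, δxz, p0, p1, the set dra is closed under the operations +, −, ∘, ⌣ and contains Id; that is, Dra = ⟨dra, +, −, ∘, ⌣, Id⟩ is an algebra. -/

import Mathlib

/- Core: the logic Ld3 : syntax, proof system, semantics, Gödel numbering. -/

inductive Var : Type
  | x
  | y
  | z
deriving DecidableEq

def Var.toNat : Var → Nat
  | .x => 0
  | .y => 1
  | .z => 2

/-- Formulas of the logic `Ld3`: one atomic formula `P(x,y,z)`, connectives `∨, ¬`
and quantifiers `∃x, ∃y, ∃z`. -/
inductive Fmd3 : Type
  | P : Fmd3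
  | or : Fmd3 → Fmd3 → Fmd3
  | not : Fmd3 → Fmd3
  | ex : Var → Fmd3 → Fmd3
deriving DecidableEq

namespace Fmd3

def and (φ ψ : Fmd3) : Fmd3 := .not (.or (.not φ) (.not ψ))

def imp (φ ψ : Fmd3) : Fmd3 := .or (.not φ) ψ

def iff (φ ψ : Fmd3) : Fmd3 := (φ.imp ψ).and (ψ.imp φ)

def all (v : Var) (φ : Fmd3) : Fmd3 := .not (.ex v (.not φ))

def freeVars : Fmd3 → Finset Var
  | .P => {Var.x, Var.y, Var.z}
  | .or a b => a.freeVars ∪ b.freeVars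
  | .not a => a.freeVars
  | .ex v a => a.freeVars.erase v

/-- `Fmd3⁰`: sentences. -/
def IsSentence (φ : Fmd3) : Prop := φ.freeVars = ∅

/-- `Fmd3¹`: formulas whose only free variable is `x`. -/
def OneFree (φ : Fmd3) : Prop := φ.freeVars ⊆ {Var.x}

/-- `φ` is a propositional tautology: every Boolean valuation that respects
`∨` and `¬` (treating other formulas as propositional atoms) makes `φ` true. -/
def Taut (φ : Fmd3) : Prop :=
  ∀ v : Fmd3 → Bool,
    (∀ a b : Fmd3, v (.or a b) = (v a || v b)) →
    (∀ a : Fmd3, v (.not a) = !(v a)) →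
    v φ = true

/-- Satisfaction of an `Fmd3` formula in a model `(M, R)` under evaluation `e`. -/
def Sat (M : Type) (R : M → M → M → Prop) : Fmd3 → (Var → M) → Prop
  | .P, e => R (e .x) (e .y) (e .z)
  | .or a b, e => Sat M R a e ∨ Sat M R b e
  | .not a, e => ¬ Sat M R a e
  | .ex v a, e => ∃ m : M, Sat M R a (Function.update e v m)

/-- A standard (injective) Gödel numbering of `Fmd3`. -/
def encode : Fmd3 → Nat
  | .P => 0
  | .or a b => 4 * Nat.pair a.encode b.encode + 1
  | .not a => 4 * a.encode + 2
  | .ex v a => 4 * Nat.pair v.toNat a.encode + 3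

end Fmd3

/-- The Hilbert-style proof system `⊢d3`, with rules Modus Ponens and Generalization,
and axiom schemes ((1))–((7)). -/
inductive Prf (T : Set Fmd3) : Fmd3 → Prop
  | hyp {φ : Fmd3} : φ ∈ T → Prf T φ
  | taut {φ : Fmd3} : φ.Taut → Prf T φ
  | ax2 (v : Var) (φ ψ : Fmd3) :
      Prf T ((Fmd3.all v (φ.imp ψ)).imp ((Fmd3.ex v φ).imp (Fmd3.ex v ψ)))
  | ax3 (v : Var) (φ : Fmd3) : Prf T (φ.imp (.ex v φ))
  | ax4 (v : Var) (φ : Fmd3) : Prf T ((Fmd3.ex v (.ex v φ)).imp (.ex v φ))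
  | ax5 (v : Var) (φ ψ : Fmd3) :
      Prf T ((Fmd3.ex v (φ.or ψ)).iff ((Fmd3.ex v φ).or (.ex v ψ)))
  | ax6 (v : Var) (φ : Fmd3) :
      Prf T ((Fmd3.ex v (.not (.ex v φ))).imp (.not (.ex v φ)))
  | ax7 (v w : Var) (φ : Fmd3) :
      Prf T ((Fmd3.ex v (.ex w φ)).imp (.ex w (.ex v φ)))
  | mp {φ ψ : Fmd3} : Prf T (φ.imp ψ) → Prf T φ → Prf T ψ
  | gen {φ : Fmd3} (v : Var) : Prf T φ → Prf T (.all v φ)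

/-- Semantic consequence for `Ld3`: every model of `T` satisfies `φ` under every
evaluation. -/
def SemConsD (T : Set Fmd3) (φ : Fmd3) : Prop :=
  ∀ (M : Type) (_ : Nonempty M) (R : M → M → M → Prop),
    (∀ ψ ∈ T, ∀ e : Var → M, ψ.Sat M R e) → ∀ e : Var → M, φ.Sat M R e

/-- Validity for `Ld3`. -/
def ValidD (φ : Fmd3) : Prop := SemConsD ∅ φ

/-- A set of `Fmd3`-formulas is recursive (decidable w.r.t. the standard
Gödel numbering). -/
def RecSetD (S : Set Fmd3) : Prop :=
  ∃ g : Nat → Bool, Computable g ∧ ∀ φ : Fmd3, φ ∈ S ↔ g φ.encode = true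

/- Parameter formulas δxy, δxz, p0, p1; simulated equality and substitution;
pairing axioms Ax and SAx; the relation-algebra and cylindric-algebra reducts. -/

structure Params where
  dxy : Fmd3
  dxz : Fmd3
  p0 : Fmd3
  p1 : Fmd3

/-- The required free-variable sets of the parameter formulas. -/
def GoodParams (P : Params) : Prop :=
  P.dxy.freeVars = {Var.x, Var.y} ∧ P.dxz.freeVars = {Var.x, Var.z} ∧
    P.p0.freeVars = {Var.x, Var.y} ∧ P.p1.freeVars = {Var.x, Var.y}

/-- A provably true formula. -/
def trueF (P : Params) : Fmd3 := P.dxy.or P.dxy.not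

/-- Simulated equality `u ≐ v` between variables. -/
def eqvF (P : Params) : Var → Var → Fmd3
  | .x, .y => P.dxy
  | .y, .x => P.dxy
  | .x, .z => P.dxz
  | .z, .x => P.dxz
  | .y, .z => .ex .x (P.dxy.and P.dxz)
  | .z, .y => .ex .x (P.dxy.and P.dxz)
  | _, _ => trueF P

/- Tarski-style simulated substitution `φ⟨u,v⟩` for `φ` with free variables
among `{x,y}`. -/
def sXZ (P : Params) (φ : Fmd3) : Fmd3 := .ex .y ((eqvF P .y .z).and φ)
def sYZ (P : Params) (φ : Fmd3) : Fmd3 := .ex .x ((eqvF P .x .y).and (sXZ P φ))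
def sYX (P : Params) (φ : Fmd3) : Fmd3 := .ex .z ((eqvF P .x .z).and (sYZ P φ))
def sZX (P : Params) (φ : Fmd3) : Fmd3 := .ex .y ((eqvF P .y .z).and (sYX P φ))
def sZY (P : Params) (φ : Fmd3) : Fmd3 := .ex .x ((eqvF P .x .z).and φ)
def sXX (P : Params) (φ : Fmd3) : Fmd3 := .ex .y ((eqvF P .x .y).and φ)
def sYY (P : Params) (φ : Fmd3) : Fmd3 := .ex .x ((eqvF P .x .y).and φ)
def sZZ (P : Params) (φ : Fmd3) : Fmd3 := .ex .x ((eqvF P .x .z).and (sXX P φ))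

def subst2 (P : Params) (φ : Fmd3) : Var → Var → Fmd3
  | .x, .y => φ
  | .x, .z => sXZ P φ
  | .y, .z => sYZ P φ
  | .y, .x => sYX P φ
  | .z, .x => sZX P φ
  | .z, .y => sZY P φ
  | .x, .x => sXX P φ
  | .y, .y => sYY P φ
  | .z, .z => sZZ P φ

/-- The third variable, distinct from two given distinct variables. -/
def third : Var → Var → Var
  | .x, .y => .z
  | .y, .x => .z
  | .x, .z => .y
  | .z, .x => .y
  | .y, .z => .x
  | .z, .y => .x
  | v, _ => v

def pform (P : Params) (k : Bool) (u v : Var) : Fmd3 :=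
  subst2 P (if k then P.p1 else P.p0) u v

/-- `u_i ≐ v_∅` for distinct `u`, `v`, where the binary sequence `i` is given
in reverse order. -/
def peqDrev (P : Params) (u v : Var) : List Bool → Fmd3
  | [] => eqvF P u v
  | [k] => pform P k u v
  | k :: rest => .ex (third u v) ((peqDrev P u (third u v) rest).and (pform P k (third u v) v))

def peqD2 (P : Params) (u v : Var) (i j : List Bool) : Fmd3 :=
  match j with
  | [] => peqDrev P u v i.reverse
  | _ => .ex (third u v)
      ((peqDrev P u (third u v) i.reverse).and (peqDrev P v (third u v) j.reverse))

/-- The formula `u_i ≐ v_j` simulating `p_{i_n} ⋯ p_{i_0} u = p_{j_k} ⋯ p_{j_0} v`. -/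
def peq (P : Params) (u : Var) (i : List Bool) (v : Var) (j : List Bool) : Fmd3 :=
  if i = [] ∧ j = [] then eqvF P u v
  else if u = v then
    match u with
    | .x => .ex .y ((eqvF P .x .y).and (peqD2 P .x .y i j))
    | .y => .ex .x ((eqvF P .x .y).and (peqD2 P .x .y i j))
    | .z => .ex .x ((peqDrev P .z .x i.reverse).and (peqDrev P .z .x j.reverse))
  else peqD2 P u v i j

def conjF (P : Params) : List Fmd3 → Fmd3
  | [] => trueF P
  | [a] => a
  | a :: rest => a.and (conjF P rest)

def vars3 : List Var := [.x, .y, .z]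

def seqsLen : Nat → List (List Bool)
  | 0 => [[]]
  | n + 1 => (seqsLen n).flatMap fun l => [false :: l, true :: l]

/-- `H`: all binary sequences of length at most 3. -/
def seqH : List (List Bool) := seqsLen 0 ++ seqsLen 1 ++ seqsLen 2 ++ seqsLen 3

def seqH2 : List (List Bool) := seqsLen 0 ++ seqsLen 1 ++ seqsLen 2

/-- (A1): transitivity of `≐`. -/
def axA1 (P : Params) : List Fmd3 :=
  vars3.flatMap fun u => vars3.flatMap fun v => vars3.flatMap fun w =>
    seqH.flatMap fun i => seqH.flatMap fun j => seqH.map fun k =>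
      ((peq P u i v j).and (peq P v j w k)).imp (peq P u i w k)

/-- (A2): congruence of `≐` w.r.t. the projections. -/
def axA2 (P : Params) : List Fmd3 :=
  vars3.flatMap fun u => vars3.flatMap fun v =>
    seqH2.flatMap fun i => seqH2.flatMap fun j => [false, true].map fun k =>
      ((peq P u i v j).and (peq P u (i ++ [k]) u (i ++ [k]))).imp
        (peq P u (i ++ [k]) v (j ++ [k]))

/-- (A3): existence of pairs. -/
def axA3 (P : Params) : List Fmd3 :=
  vars3.flatMap fun u => vars3.flatMap fun v =>
    (vars3.filter fun w => decide (w ≠ u ∧ w ≠ v)).flatMap fun w =>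
      seqH.flatMap fun i => seqH.map fun j =>
        ((peq P u i u i).and (peq P v j v j)).imp
          (.ex w ((peq P w [false] u i).and (peq P w [true] v j)))

/-- (A4): `∃w (u ≐ w)`. -/
def axA4 (P : Params) : List Fmd3 :=
  vars3.flatMap fun u => vars3.map fun w => .ex w (eqvF P u w)

/-- The pairing axiom `Ax`. -/
def AxF (P : Params) : Fmd3 := conjF P (axA1 P ++ axA2 P ++ axA3 P ++ axA4 P)

/-- (A5), first half: uniqueness of pairs. -/
def axA5a (P : Params) : Fmd3 :=
  ((peq P .x [false] .y [false]).and (peq P .x [true] .y [true])).imp (eqvF P .x .y)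

/-- (A5), second half: the two projections have the same domain. -/
def axA5b (P : Params) : Fmd3 :=
  (peq P .x [false] .x [false]).iff (peq P .x [true] .x [true])

/-- The strong pairing axiom `SAx`. -/
def SAxF (P : Params) : Fmd3 := (AxF P).and ((axA5a P).and (axA5b P))

/-- `pair := ∃y p0 ∧ ∃y p1`. -/
def pairF (P : Params) : Fmd3 := (Fmd3.ex .y P.p0).and (.ex .y P.p1)

/-- `φu_i := ∃x(x ≐ u_i ∧ φ)` for `u ∈ {y,z}`. -/
def appA (P : Params) (φ : Fmd3) (u : Var) (i : List Bool) : Fmd3 :=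
  .ex .x ((peq P .x [] u i).and φ)

/-- Relation composition `φ ∘ ψ`. -/
def compF (P : Params) (φ ψ : Fmd3) : Fmd3 :=
  .ex .y ((appA P φ .y [false]).and ((appA P ψ .y [true]).and
    ((peq P .x [false] .y [false, false]).and
      ((peq P .y [false, true] .y [true, false]).and (peq P .y [true, true] .x [true])))))

/-- Converse `φ⌣`. -/
def convF (P : Params) (φ : Fmd3) : Fmd3 :=
  .ex .y ((appA P φ .y []).and ((peq P .y [false] .x [true]).and (peq P .y [true] .x [false])))

/-- Identity `Id := x_0 ≐ x_1`. -/
def IdF (P : Params) : Fmd3 := peq P .x [false] .x [true]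

/-- Complement `−φ := pair ∧ ¬φ`. -/
def negF (P : Params) (φ : Fmd3) : Fmd3 := (pairF P).and φ.not

/-- The universe `dra` of the relation algebra reduct. -/
def dra (P : Params) : Set Fmd3 :=
  {φ | ∃ ψ : Fmd3, ψ.OneFree ∧ Prf {AxF P} (φ.iff (compF P ψ (IdF P)))}

/-- The congruence `φ ≡_Ax ψ`. -/
def REqv (P : Params) (φ ψ : Fmd3) : Prop := Prf {AxF P} (φ.iff ψ)

/-- `Triplet := x_{11} ≐ x_{11}`. -/
def TripletF (P : Params) : Fmd3 := peq P .x [true, true] .x [true, true]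

/-- `φx_i := ∃y(y ≐ x_i ∧ φy)` for `φ ∈ Fmd3¹`. -/
def appX (P : Params) (φ : Fmd3) (i : List Bool) : Fmd3 :=
  .ex .y ((peq P .y [] .x i).and (appA P φ .y []))

/-- `(0) := 0`, `(1) := 10`, `(2) := 11`. -/
def dgt (i : Fin 3) : List Bool :=
  if i = 0 then [false] else if i = 1 then [true, false] else [true, true]

/-- The formula `T_i`. -/
def TiF (P : Params) (i : Fin 3) : Fmd3 :=
  (appX P (TripletF P) [false]).and ((appX P (TripletF P) [true]).and
    (conjF P (((List.finRange 3).filter fun j => decide (j ≠ i)).map fun j =>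
      peq P .x (false :: dgt j) .x (true :: dgt j))))

/-- Cylindrification `c_i φ := φ ∘ T_i`. -/
def ciF (P : Params) (i : Fin 3) (φ : Fmd3) : Fmd3 := compF P φ (TiF P i)

/-- Diagonal `d_{ij} := Triplet x_1 ∧ x_{1(i)} ≐ x_{1(j)}`. -/
def dijF (P : Params) (i j : Fin 3) : Fmd3 :=
  (appX P (TripletF P) [true]).and (peq P .x (true :: dgt i) .x (true :: dgt j))

/-- Complement in `Dca`: `−φ := Triplet x_1 ∧ ¬φ`. -/
def negC (P : Params) (φ : Fmd3) : Fmd3 := (appX P (TripletF P) [true]).and φ.not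

/-- The universe `dca` of the cylindric reduct. -/
def dca (P : Params) : Set Fmd3 :=
  {φ | ∃ ψ : Fmd3, ψ.OneFree ∧
    Prf {SAxF P} (φ.iff ((appX P ψ [true]).and (appX P (TripletF P) [true])))}

/-- The congruence `φ ≡_SAx ψ`. -/
def CEqv (P : Params) (φ ψ : Fmd3) : Prop := Prf {SAxF P} (φ.iff ψ)
/- ===================== Auxiliary development ===================== -/
namespace DraProof
open Fmd3

/-- A fixed provably-true formula. -/
def TT : Fmd3 := .or .P (.not .P)
/-- A fixed provably-false formula. -/
def FF : Fmd3 := .not TT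

section Tauts

lemma taut1 (a : Fmd3) : (a.imp a).Taut := by
  intro v hor hnot; simp only [Fmd3.imp, hor, hnot]
  cases v a <;> rfl

lemma tautTT : TT.Taut := by
  intro v hor hnot; simp only [TT, hor, hnot]
  cases v .P <;> rfl

lemma taut_trans (a b c : Fmd3) : ((a.imp b).imp ((b.imp c).imp (a.imp c))).Taut := by
  intro v hor hnot; simp only [Fmd3.imp, hor, hnot]
  cases v a <;> cases v b <;> cases v c <;> rfl

lemma taut_mp2 (a b c : Fmd3) : ((a.imp b).imp ((a.imp (b.imp c)).imp (a.imp c))).Taut := by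
  intro v hor hnot; simp only [Fmd3.imp, hor, hnot]
  cases v a <;> cases v b <;> cases v c <;> rfl

lemma taut_andI (a b c : Fmd3) : ((c.imp a).imp ((c.imp b).imp (c.imp (a.and b)))).Taut := by
  intro v hor hnot; simp only [Fmd3.imp, Fmd3.and, hor, hnot]
  cases v a <;> cases v b <;> cases v c <;> rfl

lemma taut_andL (a b : Fmd3) : ((a.and b).imp a).Taut := by
  intro v hor hnot; simp only [Fmd3.imp, Fmd3.and, hor, hnot]
  cases v a <;> cases v b <;> rfl

lemma taut_andR (a b : Fmd3) : ((a.and b).imp b).Taut := by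
  intro v hor hnot; simp only [Fmd3.imp, Fmd3.and, hor, hnot]
  cases v a <;> cases v b <;> rfl

lemma taut_TTimp (a : Fmd3) : (a.imp TT).Taut := by
  intro v hor hnot; simp only [Fmd3.imp, TT, hor, hnot]
  cases v a <;> cases v .P <;> rfl

lemma taut_curry (a b c : Fmd3) : (((a.and b).imp c).imp (b.imp (a.imp c))).Taut := by
  intro v hor hnot; simp only [Fmd3.imp, Fmd3.and, hor, hnot]
  cases v a <;> cases v b <;> cases v c <;> rfl

lemma taut_contra (a b : Fmd3) : ((a.imp b).imp (b.not.imp a.not)).Taut := by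
  intro v hor hnot; simp only [Fmd3.imp, hor, hnot]
  cases v a <;> cases v b <;> rfl

lemma taut_dne (a : Fmd3) : (a.not.not.imp a).Taut := by
  intro v hor hnot; simp only [Fmd3.imp, hor, hnot]
  cases v a <;> rfl

lemma taut_dni (a : Fmd3) : (a.imp a.not.not).Taut := by
  intro v hor hnot; simp only [Fmd3.imp, hor, hnot]
  cases v a <;> rfl

lemma taut_nota (a b : Fmd3) : (a.imp (a.not.imp b)).Taut := by
  intro v hor hnot; simp only [Fmd3.imp, hor, hnot]
  cases v a <;> cases v b <;> rfl

lemma taut_deMand (a b : Fmd3) : ((a.and b).not.imp (a.not.or b.not)).Taut := by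
  intro v hor hnot; simp only [Fmd3.imp, Fmd3.and, hor, hnot]
  cases v a <;> cases v b <;> rfl

lemma taut_orE (a b c : Fmd3) : ((a.imp c).imp ((b.imp c).imp ((a.or b).imp c))).Taut := by
  intro v hor hnot; simp only [Fmd3.imp, hor, hnot]
  cases v a <;> cases v b <;> cases v c <;> rfl

end Tauts

section PrfRules

variable {T : Set Fmd3} {a b c : Fmd3}

lemma _root_.Prf.impTrans (h1 : Prf T (a.imp b)) (h2 : Prf T (b.imp c)) : Prf T (a.imp c) :=
  (((Prf.taut (taut_trans a b c)).mp h1).mp h2)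

lemma _root_.Prf.mp2 (h1 : Prf T (a.imp b)) (h2 : Prf T (a.imp (b.imp c))) : Prf T (a.imp c) :=
  ((Prf.taut (taut_mp2 a b c)).mp h1).mp h2

lemma _root_.Prf.andI (h1 : Prf T (c.imp a)) (h2 : Prf T (c.imp b)) : Prf T (c.imp (a.and b)) :=
  ((Prf.taut (taut_andI a b c)).mp h1).mp h2

/-- Monotonicity of ∃. -/
lemma _root_.Prf.exMono (v : Var) (h : Prf T (a.imp b)) : Prf T ((Fmd3.ex v a).imp (.ex v b)) :=
  (Prf.ax2 v a b).mp (h.gen v)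

/-- Monotonicity of ∀. -/
lemma _root_.Prf.allMono (v : Var) (h : Prf T (a.imp b)) :
    Prf T ((Fmd3.all v a).imp (.all v b)) := by
  have h1 : Prf T ((Fmd3.ex v b.not).imp (.ex v a.not)) :=
    Prf.exMono v ((Prf.taut (taut_contra a b)).mp h)
  exact (Prf.taut (taut_contra _ _)).mp h1

/-- Conjunction of a list of formulas. -/
def conjL : List Fmd3 → Fmd3
  | [] => TT
  | a :: l => a.and (conjL l)

lemma prf_conjL_proj {L : List Fmd3} (h : a ∈ L) : Prf T ((conjL L).imp a) := by
  induction L with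
  | nil => cases h
  | cons b l ih =>
    rcases List.mem_cons.1 h with rfl | h
    · exact Prf.taut (taut_andL _ _)
    · exact (Prf.taut (taut_andR b (conjL l))).impTrans (ih h)

lemma prf_imp_conjL {L : List Fmd3} (h : ∀ ψ ∈ L, Prf T (c.imp ψ)) :
    Prf T (c.imp (conjL L)) := by
  induction L with
  | nil => exact Prf.taut (taut_TTimp c)
  | cons b l ih =>
    exact Prf.andI (h b (by simp)) (ih fun ψ hψ => h ψ (by simp [hψ]))

lemma prf_conjL_mono {L L' : List Fmd3} (h : ∀ ψ ∈ L, ψ ∈ L') :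
    Prf T ((conjL L').imp (conjL L)) :=
  prf_imp_conjL fun ψ hψ => prf_conjL_proj (h ψ hψ)

/-- Local (finite, propositional-style) consequence over global theory `T`. -/
def Ded (T : Set Fmd3) (Γ : Set Fmd3) (φ : Fmd3) : Prop :=
  ∃ L : List Fmd3, (∀ ψ ∈ L, ψ ∈ Γ) ∧ Prf T ((conjL L).imp φ)

lemma taut_k (a b : Fmd3) : (a.imp (b.imp a)).Taut := by
  intro v hor hnot; simp only [Fmd3.imp, hor, hnot]
  cases v a <;> cases v b <;> rfl

lemma Ded.ofPrf {Γ : Set Fmd3} (h : Prf T a) : Ded T Γ a :=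
  ⟨[], by simp, (Prf.taut (taut_k a (conjL []))).mp h⟩

lemma Ded.ofMem {Γ : Set Fmd3} (h : a ∈ Γ) : Ded T Γ a :=
  ⟨[a], by simpa, prf_conjL_proj (by simp)⟩

lemma Ded.mp {Γ : Set Fmd3} (h1 : Ded T Γ (a.imp b)) (h2 : Ded T Γ a) : Ded T Γ b := by
  obtain ⟨L1, hL1, hp1⟩ := h1
  obtain ⟨L2, hL2, hp2⟩ := h2
  refine ⟨L1 ++ L2, by intro ψ hψ; rcases List.mem_append.1 hψ with h | h; exacts [hL1 ψ h, hL2 ψ h], ?_⟩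
  have d1 : Prf T ((conjL (L1 ++ L2)).imp (a.imp b)) :=
    (prf_conjL_mono (by intro ψ h; simp [h])).impTrans hp1
  have d2 : Prf T ((conjL (L1 ++ L2)).imp a) :=
    (prf_conjL_mono (by intro ψ h; simp [h])).impTrans hp2
  exact d2.mp2 d1

lemma Ded.mono {Γ Γ' : Set Fmd3} (hΓ : Γ ⊆ Γ') (h : Ded T Γ a) : Ded T Γ' a := by
  obtain ⟨L, hL, hp⟩ := h; exact ⟨L, fun ψ hψ => hΓ (hL ψ hψ), hp⟩

/-- Deduction theorem for local consequence. -/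
lemma Ded.deduction {Γ : Set Fmd3} {φ : Fmd3} (h : Ded T (insert φ Γ) a) :
    Ded T Γ (φ.imp a) := by
  classical
  obtain ⟨L, hL, hp⟩ := h
  refine ⟨L.filter (fun ψ => ψ ≠ φ), by
    intro ψ hψ
    have h1 := List.mem_filter.1 hψ
    rcases hL ψ h1.1 with h | h
    · exact absurd h (by simpa using h1.2)
    · exact h, ?_⟩
  have key : Prf T ((φ.and (conjL (L.filter (fun ψ => ψ ≠ φ)))).imp (conjL L)) := by
    refine prf_imp_conjL ?_
    intro ψ hψ
    by_cases hc : ψ = φ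
    · subst hc; exact Prf.taut (taut_andL _ _)
    · exact (Prf.taut (taut_andR φ _)).impTrans
        (prf_conjL_proj (List.mem_filter.2 ⟨hψ, by simpa using hc⟩))
  have := key.impTrans hp
  exact (Prf.taut (taut_curry φ _ a)).mp this

end PrfRules

section MCS
variable {T : Set Fmd3}

def Con (T Γ : Set Fmd3) : Prop := ¬ Ded T Γ FF

def Mcs (T Γ : Set Fmd3) : Prop := Con T Γ ∧ ∀ φ, φ ∉ Γ → ¬ Con T (insert φ Γ)

lemma taut_FFany (a : Fmd3) : (FF.imp a).Taut := by
  intro v hor hnot; simp only [Fmd3.imp, FF, TT, hor, hnot]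
  cases v .P <;> cases v a <;> rfl

lemma taut_notFF (a : Fmd3) : ((a.imp FF).imp a.not).Taut := by
  intro v hor hnot; simp only [Fmd3.imp, FF, TT, hor, hnot]
  cases v .P <;> cases v a <;> rfl

lemma taut_anotFF (a : Fmd3) : (a.imp (a.not.imp FF)).Taut := by
  intro v hor hnot; simp only [Fmd3.imp, FF, TT, hor, hnot]
  cases v .P <;> cases v a <;> rfl

lemma Mcs.memOfDed {Γ : Set Fmd3} (hm : Mcs T Γ) {a : Fmd3} (h : Ded T Γ a) : a ∈ Γ := by
  by_contra hmem
  refine hm.2 a hmem ?_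
  intro hded
  have h1 : Ded T Γ (a.imp FF) := Ded.deduction hded
  exact hm.1 (h1.mp h)

lemma Mcs.notMem {Γ : Set Fmd3} (hm : Mcs T Γ) {a : Fmd3} : a.not ∈ Γ ↔ a ∉ Γ := by
  constructor
  · intro h1 h2
    exact hm.1 (((Ded.ofPrf (Prf.taut (taut_anotFF a))).mp (.ofMem h2)).mp (.ofMem h1))
  · intro h1
    have h2 := hm.2 a h1
    have h3 : Ded T (insert a Γ) FF := by_contra fun hc => h2 hc
    exact hm.memOfDed ((Ded.ofPrf (Prf.taut (taut_notFF a))).mp h3.deduction)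

lemma taut_orI1 (a b : Fmd3) : (a.imp (a.or b)).Taut := by
  intro v hor hnot; simp only [Fmd3.imp, hor, hnot]
  cases v a <;> cases v b <;> rfl

lemma taut_orI2 (a b : Fmd3) : (b.imp (a.or b)).Taut := by
  intro v hor hnot; simp only [Fmd3.imp, hor, hnot]
  cases v a <;> cases v b <;> rfl

lemma taut_orNN (a b : Fmd3) : (a.not.imp (b.not.imp (a.or b).not)).Taut := by
  intro v hor hnot; simp only [Fmd3.imp, hor, hnot]
  cases v a <;> cases v b <;> rfl

lemma Mcs.orMem {Γ : Set Fmd3} (hm : Mcs T Γ) {a b : Fmd3} :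
    a.or b ∈ Γ ↔ a ∈ Γ ∨ b ∈ Γ := by
  constructor
  · intro h
    by_contra hc
    push_neg at hc
    have ha := hm.notMem.2 hc.1
    have hb := hm.notMem.2 hc.2
    have : Ded T Γ (a.or b).not :=
      ((Ded.ofPrf (Prf.taut (taut_orNN a b))).mp (.ofMem ha)).mp (.ofMem hb)
    exact (hm.notMem.1 (hm.memOfDed this)) h
  · rintro (h | h)
    · exact hm.memOfDed ((Ded.ofPrf (Prf.taut (taut_orI1 a b))).mp (.ofMem h))
    · exact hm.memOfDed ((Ded.ofPrf (Prf.taut (taut_orI2 a b))).mp (.ofMem h))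

/-- Lindenbaum's lemma. -/
lemma lindenbaum {Γ : Set Fmd3} (h : Con T Γ) : ∃ Δ, Γ ⊆ Δ ∧ Mcs T Δ := by
  classical
  have hzorn := zorn_subset_nonempty {Δ | Con T Δ} ?_ Γ h
  · obtain ⟨Δ, hsub, hmax⟩ := hzorn
    refine ⟨Δ, hsub, hmax.prop, ?_⟩
    intro φ hφ hcon
    exact hφ (hmax.mem_of_prop_insert (by exact hcon))
  · intro c hc hchain hne
    refine ⟨⋃₀ c, ?_, fun s hs => Set.subset_sUnion_of_mem hs⟩
    intro hded
    obtain ⟨L, hL, hp⟩ := hded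
    -- find a single element of the chain containing all of L
    have : ∃ Δ ∈ c, ∀ ψ ∈ L, ψ ∈ Δ := by
      clear hp
      induction L with
      | nil => obtain ⟨Δ, hΔ⟩ := hne; exact ⟨Δ, hΔ, by simp⟩
      | cons a l ih =>
        obtain ⟨Δ1, hΔ1, hl⟩ := ih (fun ψ hψ => hL ψ (by simp [hψ]))
        obtain ⟨Δ2, hΔ2s, hΔ2⟩ := hL a (by simp)
        rcases hchain.total hΔ1 hΔ2s with hss | hss
        · refine ⟨Δ2, hΔ2s, ?_⟩
          intro ψ hψ
          rcases List.mem_cons.1 hψ with rfl | hψ'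
          · exact hΔ2
          · exact hss (hl ψ hψ')
        · refine ⟨Δ1, hΔ1, ?_⟩
          intro ψ hψ
          rcases List.mem_cons.1 hψ with rfl | hψ'
          · exact hss hΔ2
          · exact hl ψ hψ'
    obtain ⟨Δ, hΔc, hΔ⟩ := this
    exact hc hΔc ⟨L, hΔ, hp⟩

end MCS

end DraProof
namespace DraProof
open Fmd3

/- ===================== Kripke semantics ===================== -/

/-- A Kripke model for `Ld3`: three pairwise commuting equivalence relations. -/
structure KModel where
  W : Type
  E : Var → W → W → Prop
  V : W → Prop
  refl : ∀ v w, E v w w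
  symm : ∀ v {a b}, E v a b → E v b a
  trans : ∀ v {a b c}, E v a b → E v b c → E v a c
  comm : ∀ v u {a b c}, E v a b → E u b c → ∃ d, E u a d ∧ E v d c

/-- Truth in a Kripke model. -/
def KTr (M : KModel) : Fmd3 → M.W → Prop
  | .P, w => M.V w
  | .or a b, w => KTr M a w ∨ KTr M b w
  | .not a, w => ¬ KTr M a w
  | .ex v a, w => ∃ w', M.E v w w' ∧ KTr M a w'

@[simp] lemma KTr_or {M : KModel} {a b : Fmd3} {w : M.W} :
    KTr M (a.or b) w ↔ (KTr M a w ∨ KTr M b w) := Iff.rfl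
@[simp] lemma KTr_not {M : KModel} {a : Fmd3} {w : M.W} :
    KTr M a.not w ↔ ¬ KTr M a w := Iff.rfl
@[simp] lemma KTr_ex {M : KModel} {v : Var} {a : Fmd3} {w : M.W} :
    KTr M (.ex v a) w ↔ ∃ w', M.E v w w' ∧ KTr M a w' := Iff.rfl
@[simp] lemma KTr_and {M : KModel} {a b : Fmd3} {w : M.W} :
    KTr M (a.and b) w ↔ (KTr M a w ∧ KTr M b w) := by
  simp only [Fmd3.and, KTr_not, KTr_or]; tauto
@[simp] lemma KTr_imp {M : KModel} {a b : Fmd3} {w : M.W} :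
    KTr M (a.imp b) w ↔ (KTr M a w → KTr M b w) := by
  simp only [Fmd3.imp, KTr_not, KTr_or]; tauto
@[simp] lemma KTr_iff {M : KModel} {a b : Fmd3} {w : M.W} :
    KTr M (a.iff b) w ↔ (KTr M a w ↔ KTr M b w) := by
  simp only [Fmd3.iff, KTr_and, KTr_imp]; tauto
lemma KTr_all {M : KModel} {v : Var} {a : Fmd3} {w : M.W} :
    KTr M (.all v a) w ↔ ∀ w', M.E v w w' → KTr M a w' := by
  simp only [Fmd3.all, KTr_not, KTr_ex, not_exists]
  constructor
  · intro h w' hw'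
    by_contra hc
    exact h w' ⟨hw', hc⟩
  · intro h w' hcon
    exact hcon.2 (h w' hcon.1)

/-- Global semantic consequence over the class of all Kripke models. -/
def GSem (T : Set Fmd3) (φ : Fmd3) : Prop :=
  ∀ M : KModel, (∀ ψ ∈ T, ∀ w, KTr M ψ w) → ∀ w, KTr M φ w

/- ===================== Soundness ===================== -/

lemma taut_sound {M : KModel} {w : M.W} {φ : Fmd3} (h : φ.Taut) : KTr M φ w := by
  classical
  have key := h (fun ψ => decide (KTr M ψ w))
    (fun a b => by by_cases ha : KTr M a w <;> by_cases hb : KTr M b w <;>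
        simp [KTr, ha, hb])
    (fun a => by by_cases ha : KTr M a w <;> simp [KTr, ha])
  simpa using key

theorem soundness {T : Set Fmd3} {φ : Fmd3} (h : Prf T φ) :
    ∀ M : KModel, (∀ ψ ∈ T, ∀ w, KTr M ψ w) → ∀ w, KTr M φ w := by
  induction h with
  | hyp h => intro M hT w; exact hT _ h w
  | taut h => intro M hT w; exact taut_sound h
  | ax2 v φ ψ =>
    intro M hT w
    simp only [KTr_imp, KTr_all, KTr_ex]
    rintro h ⟨w', hw', hφ⟩
    exact ⟨w', hw', h w' hw' hφ⟩
  | ax3 v φ =>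
    intro M hT w
    simp only [KTr_imp, KTr_ex]
    exact fun h => ⟨w, M.refl v w, h⟩
  | ax4 v φ =>
    intro M hT w
    simp only [KTr_imp, KTr_ex]
    rintro ⟨w1, h1, w2, h2, hφ⟩
    exact ⟨w2, M.trans v h1 h2, hφ⟩
  | ax5 v φ ψ =>
    intro M hT w
    simp only [KTr_iff, KTr_or, KTr_ex]
    constructor
    · rintro ⟨w', hw', h | h⟩
      · exact Or.inl ⟨w', hw', h⟩
      · exact Or.inr ⟨w', hw', h⟩
    · rintro (⟨w', hw', h⟩ | ⟨w', hw', h⟩)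
      · exact ⟨w', hw', Or.inl h⟩
      · exact ⟨w', hw', Or.inr h⟩
  | ax6 v φ =>
    intro M hT w
    simp only [KTr_imp, KTr_not, KTr_ex]
    rintro ⟨w', hw', hn⟩ ⟨w2, hw2, hφ⟩
    exact hn ⟨w2, M.trans v (M.symm v hw') hw2, hφ⟩
  | ax7 v u φ =>
    intro M hT w
    simp only [KTr_imp, KTr_ex]
    rintro ⟨w1, h1, w2, h2, hφ⟩
    obtain ⟨d, hd1, hd2⟩ := M.comm v u h1 h2
    exact ⟨d, hd1, w2, hd2, hφ⟩
  | mp h1 h2 ih1 ih2 =>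
    intro M hT w
    exact (KTr_imp.1 (ih1 M hT w)) (ih2 M hT w)
  | gen v h ih =>
    intro M hT w
    rw [KTr_all]
    exact fun w' _ => ih M hT w'

/- ===================== Canonical model and completeness ===================== -/

section Canonical
variable (T : Set Fmd3)

/-- Worlds of the canonical model. -/
def CanW := {Γ : Set Fmd3 // Mcs T Γ}

variable {T}

lemma Mcs.memOfPrf {Γ : Set Fmd3} (hm : Mcs T Γ) {a : Fmd3} (h : Prf T a) : a ∈ Γ :=
  hm.memOfDed (Ded.ofPrf h)

/-- The canonical accessibility relation. -/
def CanE (v : Var) (Γ Δ : CanW T) : Prop := ∀ φ, φ ∈ Δ.1 → (Fmd3.ex v φ) ∈ Γ.1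

lemma prf_notex_allnot {v : Var} {a : Fmd3} :
    Prf T ((Fmd3.ex v a).not.imp (Fmd3.all v a.not)) := by
  have h1 : Prf T ((Fmd3.ex v a.not.not).imp (Fmd3.ex v a)) :=
    Prf.exMono v (Prf.taut (taut_dne a))
  exact (Prf.taut (taut_contra _ _)).mp h1

/-- Formula-level normality: `∀v a ∧ ∀v b → ∀v (a ∧ b)`. -/
lemma prf_all_and {v : Var} {a b : Fmd3} :
    Prf T (((Fmd3.all v a).and (Fmd3.all v b)).imp (Fmd3.all v (a.and b))) := by
  have h1 : Prf T ((Fmd3.ex v (a.and b).not).imp (Fmd3.ex v (a.not.or b.not))) :=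
    Prf.exMono v (Prf.taut (taut_deMand a b))
  have h2 : Prf T ((Fmd3.ex v (a.not.or b.not)).imp ((Fmd3.ex v a.not).or (Fmd3.ex v b.not))) :=
    (Prf.taut (taut_andL _ _)).mp (Prf.ax5 v a.not b.not)
  have h3 := h1.impTrans h2
  -- contrapose: ¬(∃¬a ∨ ∃¬b) → ¬∃¬(a∧b), and ∀a ∧ ∀b → ¬(∃¬a ∨ ∃¬b)
  have h4 : Prf T ((((Fmd3.ex v a.not).or (Fmd3.ex v b.not)).not).imp ((Fmd3.ex v (a.and b).not).not)) :=
    (Prf.taut (taut_contra _ _)).mp h3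
  refine Prf.impTrans ?_ h4
  exact Prf.taut (by
    intro val hor hnot
    simp only [Fmd3.imp, Fmd3.and, Fmd3.all, hor, hnot]
    cases val (Fmd3.ex v (.not a)) <;> cases val (Fmd3.ex v (.not b)) <;> rfl)

/-- Conjunction of a list, inside an MCS. -/
lemma Mcs.conjLMem {Γ : Set Fmd3} (hm : Mcs T Γ) {L : List Fmd3} (h : ∀ ψ ∈ L, ψ ∈ Γ) :
    conjL L ∈ Γ := by
  exact hm.memOfDed ⟨L, h, Prf.taut (taut1 _)⟩

end Canonical

end DraProof
namespace DraProof
open Fmd3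

section Canonical2
variable {T : Set Fmd3}

lemma taut_andI2 (a b : Fmd3) : (a.imp (b.imp (a.and b))).Taut := by
  intro v hor hnot; simp only [Fmd3.imp, Fmd3.and, hor, hnot]
  cases v a <;> cases v b <;> rfl

lemma taut_curryFF (a b : Fmd3) : (((a.and b).imp FF).imp (a.imp b.not)).Taut := by
  intro v hor hnot; simp only [Fmd3.and, Fmd3.imp, FF, TT, hor, hnot]
  cases v a <;> cases v b <;> cases v .P <;> rfl

lemma taut_notnotFF (a : Fmd3) : ((a.not.imp FF).imp a).Taut := by
  intro v hor hnot; simp only [Fmd3.imp, FF, TT, hor, hnot]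
  cases v a <;> cases v .P <;> rfl

lemma Ded.and {Γ : Set Fmd3} {a b : Fmd3} (h1 : Ded T Γ a) (h2 : Ded T Γ b) :
    Ded T Γ (a.and b) :=
  ((Ded.ofPrf (Prf.taut (taut_andI2 a b))).mp h1).mp h2

lemma Mcs.allConjMem {Γ : Set Fmd3} (hm : Mcs T Γ) {v : Var} {L : List Fmd3}
    (h : ∀ ψ ∈ L, Fmd3.all v ψ ∈ Γ) : Fmd3.all v (conjL L) ∈ Γ := by
  induction L with
  | nil => exact hm.memOfPrf ((Prf.taut tautTT).gen v)
  | cons a l ih =>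
    have h1 : Ded T Γ ((Fmd3.all v a).and (Fmd3.all v (conjL l))) :=
      Ded.and (.ofMem (h a (by simp))) (.ofMem (ih fun ψ hψ => h ψ (by simp [hψ])))
    exact hm.memOfDed ((Ded.ofPrf prf_all_and).mp h1)

lemma Ded.singleton {a b : Fmd3} (h : Ded T {a} b) : Prf T (a.imp b) := by
  have h2 : Ded T (insert a ∅) b := h.mono (by simp)
  obtain ⟨L, hL, hp⟩ := h2.deduction
  have hnil : L = [] := by
    cases L with
    | nil => rfl
    | cons c l => exact absurd (hL c (by simp)) (by simp)
  subst hnil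
  exact hp.mp (Prf.taut tautTT)

lemma list_choice {L : List Fmd3} {A : Fmd3 → Prop} {Θ : Set Fmd3} {v : Var}
    (hex : ∀ ψ ∈ L, A ψ ∨ ∃ χ ∈ Θ, ψ = Fmd3.ex v χ) :
    ∃ Lc : List Fmd3, (∀ χ ∈ Lc, χ ∈ Θ) ∧
      ∀ ψ ∈ L, A ψ ∨ ∃ χ ∈ Lc, ψ = Fmd3.ex v χ := by
  induction L with
  | nil => exact ⟨[], by simp, by simp⟩
  | cons a l ih =>
    obtain ⟨Lc, hLc1, hLc2⟩ := ih (fun ψ hψ => hex ψ (by simp [hψ]))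
    rcases hex a (by simp) with h | ⟨χ, hχ, rfl⟩
    · refine ⟨Lc, hLc1, ?_⟩
      intro ψ hψ
      rcases List.mem_cons.1 hψ with rfl | hψ'
      · exact Or.inl h
      · exact hLc2 ψ hψ'
    · refine ⟨χ :: Lc, ?_, ?_⟩
      · intro χ' hχ'
        rcases List.mem_cons.1 hχ' with rfl | hh
        · exact hχ
        · exact hLc1 χ' hh
      · intro ψ hψ
        rcases List.mem_cons.1 hψ with rfl | hψ'
        · exact Or.inr ⟨χ, by simp, rfl⟩
        · rcases hLc2 ψ hψ' with h | ⟨χ'', h'', rfl⟩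
          · exact Or.inl h
          · exact Or.inr ⟨χ'', by simp [h''], rfl⟩

/-- The existence lemma. -/
lemma exists_can (Γ : CanW T) {v : Var} {φ : Fmd3} (h : (Fmd3.ex v φ) ∈ Γ.1) :
    ∃ Δ : CanW T, CanE v Γ Δ ∧ φ ∈ Δ.1 := by
  classical
  set B : Set Fmd3 := insert φ {ψ | Fmd3.all v ψ ∈ Γ.1} with hB
  have hcon : Con T B := by
    intro hded
    have h1 : Ded T {ψ | Fmd3.all v ψ ∈ Γ.1} (φ.imp FF) := Ded.deduction hded
    have h2 : Ded T {ψ | Fmd3.all v ψ ∈ Γ.1} φ.not :=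
      (Ded.ofPrf (Prf.taut (taut_notFF φ))).mp h1
    obtain ⟨L, hL, hp⟩ := h2
    have hall : Fmd3.all v (conjL L) ∈ Γ.1 := Γ.2.allConjMem hL
    have h3 : Fmd3.all v φ.not ∈ Γ.1 :=
      Γ.2.memOfDed ((Ded.ofPrf (Prf.allMono v hp)).mp (.ofMem hall))
    have h4 : (Fmd3.ex v φ.not.not) ∈ Γ.1 :=
      Γ.2.memOfDed ((Ded.ofPrf (Prf.exMono v (Prf.taut (taut_dni φ)))).mp (.ofMem h))
    exact (Γ.2.notMem.1 h3) h4
  obtain ⟨Δ', hsub, hmcs⟩ := lindenbaum hcon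
  refine ⟨⟨Δ', hmcs⟩, ?_, hsub (by simp [hB])⟩
  intro ψ hψ
  by_contra hc
  have h5 : (Fmd3.ex v ψ).not ∈ Γ.1 := Γ.2.notMem.2 hc
  have h6 : Fmd3.all v ψ.not ∈ Γ.1 :=
    Γ.2.memOfDed ((Ded.ofPrf prf_notex_allnot).mp (.ofMem h5))
  have h7 : ψ.not ∈ Δ' := hsub (by simp [hB]; right; exact h6)
  exact (hmcs.notMem.1 h7) hψ

lemma canE_refl (v : Var) (Γ : CanW T) : CanE v Γ Γ :=
  fun φ hφ => Γ.2.memOfDed ((Ded.ofPrf (Prf.ax3 v φ)).mp (.ofMem hφ))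

lemma canE_symm (v : Var) {Γ Δ : CanW T} (h : CanE v Γ Δ) : CanE v Δ Γ := by
  intro φ hφ
  by_contra hc
  have h1 : (Fmd3.ex v φ).not ∈ Δ.1 := Δ.2.notMem.2 hc
  have h2 : (Fmd3.ex v (Fmd3.ex v φ).not) ∈ Γ.1 := h _ h1
  have h3 : (Fmd3.ex v φ).not ∈ Γ.1 :=
    Γ.2.memOfDed ((Ded.ofPrf (Prf.ax6 v φ)).mp (.ofMem h2))
  have h4 : (Fmd3.ex v φ) ∈ Γ.1 :=
    Γ.2.memOfDed ((Ded.ofPrf (Prf.ax3 v φ)).mp (.ofMem hφ))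
  exact (Γ.2.notMem.1 h3) h4

lemma canE_trans (v : Var) {Γ Δ Θ : CanW T} (h1 : CanE v Γ Δ) (h2 : CanE v Δ Θ) :
    CanE v Γ Θ := by
  intro φ hφ
  have h3 : (Fmd3.ex v (Fmd3.ex v φ)) ∈ Γ.1 := h1 _ (h2 _ hφ)
  exact Γ.2.memOfDed ((Ded.ofPrf (Prf.ax4 v φ)).mp (.ofMem h3))

lemma canE_comm (v u : Var) {Γ Δ Θ : CanW T} (h1 : CanE v Γ Δ) (h2 : CanE u Δ Θ) :
    ∃ Λ : CanW T, CanE u Γ Λ ∧ CanE v Λ Θ := by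
  classical
  set B : Set Fmd3 := {ψ | Fmd3.all u ψ ∈ Γ.1} ∪ {χ' | ∃ χ ∈ Θ.1, χ' = Fmd3.ex v χ} with hB
  have hcon : Con T B := by
    intro hded
    obtain ⟨L, hL, hp⟩ := hded
    set La := L.filter (fun ψ => decide (Fmd3.all u ψ ∈ Γ.1)) with hLa
    -- extract the χ's
    have hex : ∀ ψ ∈ L, (Fmd3.all u ψ ∈ Γ.1) ∨ ∃ χ ∈ Θ.1, ψ = Fmd3.ex v χ := by
      intro ψ hψ
      rcases hL ψ hψ with h | h
      · exact Or.inl h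
      · exact Or.inr h
    have hLc := list_choice hex
    obtain ⟨Lc, hLc1, hLc2⟩ := hLc
    set χc := conjL Lc with hχc
    have hχΘ : χc ∈ Θ.1 := Θ.2.conjLMem hLc1
    -- ex u (ex v χc) ∈ Γ
    have hexuv : (Fmd3.ex u (Fmd3.ex v χc)) ∈ Γ.1 := by
      have s1 : (Fmd3.ex u χc) ∈ Δ.1 := h2 _ hχΘ
      have s2 : (Fmd3.ex v (Fmd3.ex u χc)) ∈ Γ.1 := h1 _ s1
      exact Γ.2.memOfDed ((Ded.ofPrf (Prf.ax7 v u χc)).mp (.ofMem s2))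
    -- Prf side
    have key : Prf T (((conjL La).and (Fmd3.ex v χc)).imp FF) := by
      refine Prf.impTrans ?_ hp
      refine prf_imp_conjL ?_
      intro ψ hψ
      rcases hex ψ hψ with h | ⟨χ, hχ, rfl⟩
      · refine (Prf.taut (taut_andL _ _)).impTrans (prf_conjL_proj ?_)
        exact List.mem_filter.2 ⟨hψ, by simpa using h⟩
      · by_cases hmem : Fmd3.all u (Fmd3.ex v χ) ∈ Γ.1
        · refine (Prf.taut (taut_andL _ _)).impTrans (prf_conjL_proj ?_)
          exact List.mem_filter.2 ⟨hψ, by simpa using hmem⟩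
        · -- need χ ∈ Lc
          rcases hLc2 _ hψ with h' | ⟨χ', hχ', heq⟩
          · exact absurd h' hmem
          · have : Prf T ((Fmd3.ex v χc).imp (Fmd3.ex v χ')) :=
              Prf.exMono v (prf_conjL_proj hχ')
            rw [heq]
            exact (Prf.taut (taut_andR _ _)).impTrans this
    have key2 : Prf T ((conjL La).imp (Fmd3.ex v χc).not) :=
      (Prf.taut (taut_curryFF _ _)).mp key
    have hallLa : Fmd3.all u (conjL La) ∈ Γ.1 := by
      refine Γ.2.allConjMem ?_
      intro ψ hψ
      have := List.mem_filter.1 hψ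
      simpa using this.2
    have h8 : Fmd3.all u (Fmd3.ex v χc).not ∈ Γ.1 :=
      Γ.2.memOfDed ((Ded.ofPrf (Prf.allMono u key2)).mp (.ofMem hallLa))
    have h9 : (Fmd3.ex u (Fmd3.ex v χc).not.not) ∈ Γ.1 :=
      Γ.2.memOfDed ((Ded.ofPrf (Prf.exMono u (Prf.taut (taut_dni _)))).mp (.ofMem hexuv))
    exact (Γ.2.notMem.1 h8) h9
  obtain ⟨Λ', hsub, hmcs⟩ := lindenbaum hcon
  refine ⟨⟨Λ', hmcs⟩, ?_, ?_⟩
  · intro ψ hψ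
    by_contra hc
    have h5 : (Fmd3.ex u ψ).not ∈ Γ.1 := Γ.2.notMem.2 hc
    have h6 : Fmd3.all u ψ.not ∈ Γ.1 :=
      Γ.2.memOfDed ((Ded.ofPrf prf_notex_allnot).mp (.ofMem h5))
    have h7 : ψ.not ∈ Λ' := hsub (Or.inl h6)
    exact (hmcs.notMem.1 h7) hψ
  · intro χ hχ
    exact hsub (Or.inr ⟨χ, hχ, rfl⟩)

/-- The canonical model. -/
def canM (T : Set Fmd3) : KModel where
  W := CanW T
  E := CanE
  V := fun Γ => Fmd3.P ∈ Γ.1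
  refl := canE_refl
  symm := by intro v a b h; exact canE_symm v h
  trans := by intro v a b c h1 h2; exact canE_trans v h1 h2
  comm := by intro v u a b c h1 h2; exact canE_comm v u h1 h2

/-- The truth lemma. -/
lemma truth_lemma (φ : Fmd3) : ∀ Γ : CanW T, KTr (canM T) φ Γ ↔ φ ∈ Γ.1 := by
  induction φ with
  | P => intro Γ; exact Iff.rfl
  | or a b iha ihb =>
    intro Γ
    exact (KTr_or (M := canM T) (w := Γ)).trans (by rw [iha, ihb, Γ.2.orMem])
  | not a iha =>
    intro Γ
    exact (KTr_not (M := canM T) (w := Γ)).trans (by rw [iha, ← Γ.2.notMem])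
  | ex v a ih =>
    intro Γ
    constructor
    · rintro ⟨Δ, hE, hTr⟩
      exact hE a ((ih Δ).1 hTr)
    · intro h
      obtain ⟨Δ, hE, hmem⟩ := exists_can Γ h
      exact ⟨Δ, hE, (ih Δ).2 hmem⟩

/-- Completeness of `⊢d3` w.r.t. the Kripke semantics. -/
theorem completeness {φ : Fmd3} (h : GSem T φ) : Prf T φ := by
  by_contra hn
  have hcon : Con T {φ.not} := by
    intro hded
    have h1 : Prf T (φ.not.imp FF) := Ded.singleton hded
    exact hn ((Prf.taut (taut_notnotFF φ)).mp h1)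
  obtain ⟨Γ', hsub, hmcs⟩ := lindenbaum hcon
  have hT : ∀ ψ ∈ T, ∀ Γ : CanW T, KTr (canM T) ψ Γ := by
    intro ψ hψ Γ
    exact (truth_lemma ψ Γ).2 (Γ.2.memOfPrf (Prf.hyp hψ))
  have hφ := h (canM T) hT ⟨Γ', hmcs⟩
  have hmem : φ ∈ Γ' := (truth_lemma φ ⟨Γ', hmcs⟩).1 hφ
  exact (hmcs.notMem.1 (hsub rfl)) hmem

end Canonical2
end DraProof
namespace DraProof
open Fmd3

/- ===================== Free variables ===================== -/

@[simp] lemma fv_or {a b : Fmd3} : (a.or b).freeVars = a.freeVars ∪ b.freeVars := rfl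
@[simp] lemma fv_not {a : Fmd3} : a.not.freeVars = a.freeVars := rfl
@[simp] lemma fv_ex {v : Var} {a : Fmd3} : (Fmd3.ex v a).freeVars = a.freeVars.erase v := rfl
@[simp] lemma fv_and {a b : Fmd3} : (a.and b).freeVars = a.freeVars ∪ b.freeVars := by
  simp [Fmd3.and]
@[simp] lemma fv_P : (Fmd3.P).freeVars = {Var.x, Var.y, Var.z} := rfl

/-- The context: a Kripke model in which `Ax` holds everywhere, with good parameters. -/
structure Ctx (P : Params) (M : KModel) : Prop where
  ax : ∀ w, KTr M (AxF P) w
  gp : GoodParams P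

variable {P : Params} {M : KModel}

lemma tr_trueF {w : M.W} : KTr M (trueF P) w := by
  simp only [trueF, KTr_or, KTr_not]
  exact em _

lemma eqvF_comm (P : Params) (u v : Var) : eqvF P u v = eqvF P v u := by
  cases u <;> cases v <;> rfl

lemma fv_eqvF (C : GoodParams P) {u v : Var} (h : u ≠ v) :
    (eqvF P u v).freeVars ⊆ {u, v} := by
  cases u <;> cases v <;> simp_all [eqvF, C.1, C.2.1] <;> decide

lemma third_ne {u v : Var} (h : u ≠ v) : third u v ≠ u ∧ third u v ≠ v := by
  cases u <;> cases v <;> simp_all [third] <;> decide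

lemma third_comm (u v : Var) : third u v = third v u := by
  cases u <;> cases v <;> rfl

lemma erase_union_subset {s1 s2 : Finset Var} {t u v : Var}
    (h1 : s1 ⊆ {u, t}) (h2 : s2 ⊆ {v, t}) : (s1 ∪ s2).erase t ⊆ {u, v} := by
  intro a ha
  simp only [Finset.mem_erase, Finset.mem_union] at ha
  obtain ⟨hne, hmem⟩ := ha
  simp only [Finset.mem_insert, Finset.mem_singleton]
  rcases hmem with h | h
  · have := h1 h; simp only [Finset.mem_insert, Finset.mem_singleton] at this; tauto
  · have := h2 h; simp only [Finset.mem_insert, Finset.mem_singleton] at this; tauto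

lemma fv_pform (C : GoodParams P) (k : Bool) {u v : Var} (h : u ≠ v) :
    (pform P k u v).freeVars ⊆ {u, v} := by
  have hk : (if k then P.p1 else P.p0).freeVars = {Var.x, Var.y} := by
    cases k <;> simp [C.2.2.1, C.2.2.2]
  cases u <;> cases v <;>
    simp_all [pform, subst2, sXZ, sYZ, sYX, sZX, sZY, sXX, sYY, sZZ, eqvF, C.1, C.2.1] <;>
    intro a ha <;> simp_all <;> tauto

lemma fv_peqDrev (C : GoodParams P) {u : Var} (l : List Bool) :
    ∀ {v : Var}, u ≠ v → (peqDrev P u v l).freeVars ⊆ {u, v} := by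
  induction l with
  | nil => intro v h; exact fv_eqvF C h
  | cons k rest ih =>
    intro v h
    cases rest with
    | nil => exact fv_pform C k h
    | cons k2 r2 =>
      show ((peqDrev P u (third u v) (k2 :: r2)).freeVars ∪
        (pform P k (third u v) v).freeVars).erase (third u v) ⊆ {u, v}
      have h2' : (pform P k (third u v) v).freeVars ⊆ {v, third u v} := by
        intro a ha
        have := fv_pform C k (v := v) (u := third u v) (third_ne h).2 ha
        simp only [Finset.mem_insert, Finset.mem_singleton] at this ⊢
        tauto
      exact erase_union_subset (ih (Ne.symm (third_ne h).1)) h2' 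

lemma fv_peqD2 (C : GoodParams P) {u v : Var} (h : u ≠ v) (i j : List Bool) :
    (peqD2 P u v i j).freeVars ⊆ {u, v} := by
  cases j with
  | nil => exact fv_peqDrev C i.reverse h
  | cons k j' =>
    show ((peqDrev P u (third u v) i.reverse).freeVars ∪
      (peqDrev P v (third u v) ((k :: j').reverse)).freeVars).erase (third u v) ⊆ {u, v}
    exact erase_union_subset (fv_peqDrev C i.reverse (Ne.symm (third_ne h).1))
      (fv_peqDrev C (k :: j').reverse (Ne.symm (third_ne h).2))

lemma peq_nilnil (u v : Var) : peq P u [] v [] = eqvF P u v := by simp [peq]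

lemma peq_ne {u v : Var} (h : u ≠ v) {i j : List Bool} (hij : ¬(i = [] ∧ j = [])) :
    peq P u i v j = peqD2 P u v i j := by
  simp [peq, hij, h]

lemma peq_xx {i j : List Bool} (hij : ¬(i = [] ∧ j = [])) :
    peq P .x i .x j = .ex .y ((eqvF P .x .y).and (peqD2 P .x .y i j)) := by
  simp [peq, hij]

lemma peq_yy {i j : List Bool} (hij : ¬(i = [] ∧ j = [])) :
    peq P .y i .y j = .ex .x ((eqvF P .x .y).and (peqD2 P .x .y i j)) := by
  simp [peq, hij]

lemma peq_zz {i j : List Bool} (hij : ¬(i = [] ∧ j = [])) :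
    peq P .z i .z j = .ex .x ((peqDrev P .z .x i.reverse).and (peqDrev P .z .x j.reverse)) := by
  simp [peq, hij]

lemma peqDrev_eq_peq {u v : Var} (h : u ≠ v) (i : List Bool) :
    peqDrev P u v i.reverse = peq P u i v [] := by
  by_cases hi : i = []
  · subst hi; exact (peq_nilnil u v).symm
  · rw [peq_ne h (by simp [hi])]; rfl

lemma fv_peq (C : GoodParams P) (u v : Var) (i j : List Bool) (h : ¬(u = v ∧ i = [] ∧ j = [])) :
    (peq P u i v j).freeVars ⊆ {u, v} := by
  by_cases huv : u = v
  · subst huv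
    have hij : ¬(i = [] ∧ j = []) := fun hc => h ⟨rfl, hc⟩
    have key : ∀ s : Finset Var, s ⊆ {u} → s ⊆ {u, u} := by
      intro s hs a ha; have := hs ha; simp_all
    refine key _ ?_
    cases u
    · rw [peq_xx hij]
      show ((eqvF P .x .y).freeVars ∪ (peqD2 P .x .y i j).freeVars).erase .y ⊆ {Var.x}
      have := erase_union_subset (t := Var.y) (u := Var.x) (v := Var.x)
        (fv_eqvF C (by decide)) (fv_peqD2 C (by decide) i j)
      intro a ha; have := this ha; simp_all
    · rw [peq_yy hij]
      show ((eqvF P .x .y).freeVars ∪ (peqD2 P .x .y i j).freeVars).erase .x ⊆ {Var.y}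
      have h1 : (eqvF P .x .y).freeVars ⊆ {Var.y, Var.x} := by
        intro a ha; have := fv_eqvF C (u := Var.x) (v := Var.y) (by decide) ha; simp_all; tauto
      have h2 : (peqD2 P .x .y i j).freeVars ⊆ {Var.y, Var.x} := by
        intro a ha; have := fv_peqD2 C (u := Var.x) (v := Var.y) (by decide) i j ha; simp_all; tauto
      have := erase_union_subset (t := Var.x) (u := Var.y) (v := Var.y) h1 h2
      intro a ha; have := this ha; simp_all
    · rw [peq_zz hij]
      show ((peqDrev P .z .x i.reverse).freeVars ∪ (peqDrev P .z .x j.reverse).freeVars).erase .x ⊆ {Var.z}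
      have := erase_union_subset (t := Var.x) (u := Var.z) (v := Var.z)
        (fv_peqDrev C i.reverse (by decide)) (fv_peqDrev C j.reverse (by decide))
      intro a ha; have := this ha; simp_all
  · by_cases hij : i = [] ∧ j = []
    · obtain ⟨rfl, rfl⟩ := hij
      rw [peq_nilnil]; exact fv_eqvF C huv
    · rw [peq_ne huv hij]; exact fv_peqD2 C huv i j

/- ===================== Invariance ===================== -/

lemma KTr_move {v : Var} {φ : Fmd3} (h : v ∉ φ.freeVars) :
    ∀ {w w' : M.W}, M.E v w w' → (KTr M φ w ↔ KTr M φ w') := by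
  induction φ with
  | P => cases v <;> simp_all
  | or a b iha ihb =>
    intro w w' he
    simp only [fv_or, Finset.mem_union] at h
    push_neg at h
    rw [KTr_or, KTr_or, iha h.1 he, ihb h.2 he]
  | not a iha =>
    intro w w' he
    rw [KTr_not, KTr_not, iha h he]
  | ex u a iha =>
    intro w w' he
    by_cases hv : v = u
    · subst hv
      simp only [KTr_ex]
      constructor
      · rintro ⟨w1, h1, ha⟩; exact ⟨w1, M.trans v (M.symm v he) h1, ha⟩
      · rintro ⟨w1, h1, ha⟩; exact ⟨w1, M.trans v he h1, ha⟩
    · have hva : v ∉ a.freeVars := by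
        intro hc; exact h (by simp [Finset.mem_erase, hv, hc])
      simp only [KTr_ex]
      constructor
      · rintro ⟨w1, h1, ha⟩
        obtain ⟨d, hd1, hd2⟩ := M.comm v u (M.symm v he) h1
        exact ⟨d, hd1, (iha hva hd2).2 ha⟩
      · rintro ⟨w1, h1, ha⟩
        obtain ⟨d, hd1, hd2⟩ := M.comm v u he h1
        exact ⟨d, hd1, (iha hva hd2).2 ha⟩

/- ===================== The relation Q ===================== -/

/-- `Q u i v j w`: the formula `u_i ≐ v_j` holds at the world `w`. -/
def Q (P : Params) (M : KModel) (u : Var) (i : List Bool) (v : Var) (j : List Bool)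
    (w : M.W) : Prop :=
  KTr M (peq P u i v j) w

lemma Q_nilnil_iff {u v : Var} {w : M.W} : Q P M u [] v [] w ↔ KTr M (eqvF P u v) w := by
  rw [Q, peq_nilnil]

lemma eqvF_diag (P : Params) (u : Var) : eqvF P u u = trueF P := by cases u <;> rfl

lemma Q_diag_nilnil {u : Var} {w : M.W} : Q P M u [] u [] w := by
  rw [Q, peq_nilnil, eqvF_diag]; exact tr_trueF

lemma Q_move (C : Ctx P M) {t u v : Var} (h1 : t ≠ u) (h2 : t ≠ v)
    {i j : List Bool} {w w' : M.W} (he : M.E t w w') :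
    Q P M u i v j w ↔ Q P M u i v j w' := by
  by_cases hd : u = v ∧ i = [] ∧ j = []
  · obtain ⟨rfl, rfl, rfl⟩ := hd
    exact iff_of_true Q_diag_nilnil Q_diag_nilnil
  · refine KTr_move (fun hc => ?_) he
    have := fv_peq C.gp u v i j hd hc
    simp only [Finset.mem_insert, Finset.mem_singleton] at this
    tauto

lemma Q_sym_nilnil (C : Ctx P M) {u v : Var} {w : M.W} (h : Q P M u [] v [] w) :
    Q P M v [] u [] w := by
  rw [Q_nilnil_iff] at h ⊢
  rwa [eqvF_comm]

/- ===================== Ax instances ===================== -/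

lemma mem_vars3 (u : Var) : u ∈ vars3 := by cases u <;> decide

lemma mem_seqH {l : List Bool} (h : l.length ≤ 3) : l ∈ seqH := by
  rcases l with _ | ⟨a, _ | ⟨b, _ | ⟨c, _ | ⟨d, t⟩⟩⟩⟩
  · decide
  · cases a <;> decide
  · cases a <;> cases b <;> decide
  · cases a <;> cases b <;> cases c <;> decide
  · simp at h; omega

lemma mem_seqH2 {l : List Bool} (h : l.length ≤ 2) : l ∈ seqH2 := by
  rcases l with _ | ⟨a, _ | ⟨b, _ | ⟨c, t⟩⟩⟩
  · decide
  · cases a <;> decide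
  · cases a <;> cases b <;> decide
  · simp at h

lemma tr_conjF {L : List Fmd3} {w : M.W} :
    KTr M (conjF P L) w ↔ ∀ θ ∈ L, KTr M θ w := by
  induction L with
  | nil => simp [conjF, tr_trueF]
  | cons a l ih =>
    cases l with
    | nil => simp [conjF]
    | cons b l2 =>
      show KTr M (a.and (conjF P (b :: l2))) w ↔ _
      rw [KTr_and, ih]
      simp

lemma tr_AxF_mem (C : Ctx P M) {θ : Fmd3} {w : M.W}
    (h : θ ∈ axA1 P ∨ θ ∈ axA2 P ∨ θ ∈ axA3 P ∨ θ ∈ axA4 P) : KTr M θ w := by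
  refine tr_conjF.1 (C.ax w) θ ?_
  show θ ∈ axA1 P ++ axA2 P ++ axA3 P ++ axA4 P
  simp only [List.mem_append]
  tauto

/-- (A1): transitivity. -/
lemma axT (C : Ctx P M) {u v t : Var} {i j k : List Bool}
    (hi : i.length ≤ 3) (hj : j.length ≤ 3) (hk : k.length ≤ 3) {w : M.W}
    (h1 : Q P M u i v j w) (h2 : Q P M v j t k w) : Q P M u i t k w := by
  have hm : (((peq P u i v j).and (peq P v j t k)).imp (peq P u i t k)) ∈ axA1 P := by
    simp only [axA1, List.mem_flatMap, List.mem_map]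
    exact ⟨u, mem_vars3 u, v, mem_vars3 v, t, mem_vars3 t, i, mem_seqH hi, j, mem_seqH hj,
      k, mem_seqH hk, rfl⟩
  have := tr_AxF_mem C (Or.inl hm) (w := w)
  rw [KTr_imp, KTr_and] at this
  exact this ⟨h1, h2⟩

/-- (A2): congruence. -/
lemma axC (C : Ctx P M) {u v : Var} {i j : List Bool} {k : Bool}
    (hi : i.length ≤ 2) (hj : j.length ≤ 2) {w : M.W}
    (h1 : Q P M u i v j w) (h2 : Q P M u (i ++ [k]) u (i ++ [k]) w) :
    Q P M u (i ++ [k]) v (j ++ [k]) w := by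
  have hm : (((peq P u i v j).and (peq P u (i ++ [k]) u (i ++ [k]))).imp
      (peq P u (i ++ [k]) v (j ++ [k]))) ∈ axA2 P := by
    simp only [axA2, List.mem_flatMap, List.mem_map]
    exact ⟨u, mem_vars3 u, v, mem_vars3 v, i, mem_seqH2 hi, j, mem_seqH2 hj,
      k, by cases k <;> simp, rfl⟩
  have := tr_AxF_mem C (Or.inr (Or.inl hm)) (w := w)
  rw [KTr_imp, KTr_and] at this
  exact this ⟨h1, h2⟩

/-- (A3): pairing. -/
lemma axP (C : Ctx P M) {u v t : Var} (ht1 : t ≠ u) (ht2 : t ≠ v) {i j : List Bool}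
    (hi : i.length ≤ 3) (hj : j.length ≤ 3) {w : M.W}
    (h1 : Q P M u i u i w) (h2 : Q P M v j v j w) :
    ∃ w', M.E t w w' ∧ Q P M t [false] u i w' ∧ Q P M t [true] v j w' := by
  have hm : (((peq P u i u i).and (peq P v j v j)).imp
      (.ex t ((peq P t [false] u i).and (peq P t [true] v j)))) ∈ axA3 P := by
    simp only [axA3, List.mem_flatMap, List.mem_map]
    refine ⟨u, mem_vars3 u, v, mem_vars3 v, t, ?_, i, mem_seqH hi, j, mem_seqH hj, rfl⟩
    rw [List.mem_filter]
    exact ⟨mem_vars3 t, by simp [ht1, ht2]⟩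
  have := tr_AxF_mem C (Or.inr (Or.inr (Or.inl hm))) (w := w)
  rw [KTr_imp, KTr_and] at this
  obtain ⟨w', hw', hq⟩ := this ⟨h1, h2⟩
  rw [KTr_and] at hq
  exact ⟨w', hw', hq.1, hq.2⟩

/-- (A4): existence of copies. -/
lemma axE (C : Ctx P M) (u t : Var) (w : M.W) :
    ∃ w', M.E t w w' ∧ Q P M u [] t [] w' := by
  have hm : (Fmd3.ex t (eqvF P u t)) ∈ axA4 P := by
    simp only [axA4, List.mem_flatMap, List.mem_map]
    exact ⟨u, mem_vars3 u, t, mem_vars3 t, rfl⟩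
  have := tr_AxF_mem C (Or.inr (Or.inr (Or.inr hm))) (w := w)
  obtain ⟨w', hw', he⟩ := this
  exact ⟨w', hw', Q_nilnil_iff.2 he⟩

end DraProof
namespace DraProof
open Fmd3

variable {P : Params} {M : KModel}

/- ===================== structural unfoldings ===================== -/

lemma Q_def {u v : Var} {i j : List Bool} {w : M.W} :
    Q P M u i v j w ↔ KTr M (peq P u i v j) w := Iff.rfl

/-- Unfolding `u_i ≐ v_j` for `u ≠ v`, `j ≠ []`. -/
lemma Q_split {u v : Var} (h : u ≠ v) {j : List Bool} (hj : j ≠ []) {i : List Bool} {w : M.W} :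
    Q P M u i v j w ↔ ∃ w', M.E (third u v) w w' ∧
      Q P M u i (third u v) [] w' ∧ Q P M v j (third u v) [] w' := by
  obtain ⟨k, j', rfl⟩ : ∃ k j', j = k :: j' := by
    cases j with
    | nil => exact absurd rfl hj
    | cons k j' => exact ⟨k, j', rfl⟩
  rw [Q_def, peq_ne h (by simp)]
  show KTr M (.ex (third u v) ((peqDrev P u (third u v) i.reverse).and
    (peqDrev P v (third u v) (k :: j').reverse))) w ↔ _
  rw [peqDrev_eq_peq (Ne.symm (third_ne h).1) i,
    peqDrev_eq_peq (Ne.symm (third_ne h).2) (k :: j')]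
  simp only [KTr_ex, KTr_and]
  exact Iff.rfl

/-- Unfolding `u_{i'k} ≐ v` for `u ≠ v`, `i' ≠ []`. -/
lemma Q_snoc {u v : Var} (h : u ≠ v) {i' : List Bool} (hi' : i' ≠ []) (k : Bool) {w : M.W} :
    Q P M u (i' ++ [k]) v [] w ↔ ∃ w', M.E (third u v) w w' ∧
      Q P M u i' (third u v) [] w' ∧ Q P M (third u v) [k] v [] w' := by
  rw [Q_def, peq_ne h (by simp)]
  show KTr M (peqD2 P u v (i' ++ [k]) []) w ↔ _
  have h1 : peqD2 P u v (i' ++ [k]) [] = peqDrev P u v (i' ++ [k]).reverse := rfl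
  rw [h1, List.reverse_append]
  obtain ⟨a, t, ht⟩ : ∃ a t, i'.reverse = a :: t := by
    cases hr : i'.reverse with
    | nil => exact absurd (by simpa using congrArg List.reverse hr) hi'
    | cons a t => exact ⟨a, t, rfl⟩
  show KTr M (peqDrev P u v (k :: i'.reverse)) w ↔ _
  rw [ht]
  show KTr M (.ex (third u v) ((peqDrev P u (third u v) (a :: t)).and
    (pform P k (third u v) v))) w ↔ _
  rw [← ht, peqDrev_eq_peq (Ne.symm (third_ne h).1) i']
  have h2 : pform P k (third u v) v = peq P (third u v) [k] v [] := by
    rw [← peqDrev_eq_peq (third_ne h).2 [k]]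
    rfl
  rw [h2]
  simp only [KTr_ex, KTr_and]
  exact Iff.rfl

lemma Q_xx_iff {i j : List Bool} (hij : ¬(i = [] ∧ j = [])) {w : M.W} :
    Q P M .x i .x j w ↔ ∃ w', M.E .y w w' ∧
      Q P M .x [] .y [] w' ∧ Q P M .x i .y j w' := by
  rw [Q_def, peq_xx hij]
  simp only [KTr_ex, KTr_and]
  constructor
  · rintro ⟨w', he, h1, h2⟩
    refine ⟨w', he, by rw [Q_def, peq_nilnil]; exact h1, ?_⟩
    rw [Q_def]
    by_cases hj : j = [] <;> by_cases hi : i = []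
    · exact absurd ⟨hi, hj⟩ hij
    · rw [peq_ne (by decide) (by tauto)]; exact h2
    · rw [peq_ne (by decide) (by tauto)]; exact h2
    · rw [peq_ne (by decide) (by tauto)]; exact h2
  · rintro ⟨w', he, h1, h2⟩
    refine ⟨w', he, by rw [Q_def, peq_nilnil] at h1; exact h1, ?_⟩
    rw [Q_def] at h2
    rw [peq_ne (by decide) hij] at h2
    exact h2

lemma Q_yy_iff {i j : List Bool} (hij : ¬(i = [] ∧ j = [])) {w : M.W} :
    Q P M .y i .y j w ↔ ∃ w', M.E .x w w' ∧
      Q P M .x [] .y [] w' ∧ Q P M .x i .y j w' := by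
  rw [Q_def, peq_yy hij]
  simp only [KTr_ex, KTr_and]
  constructor
  · rintro ⟨w', he, h1, h2⟩
    refine ⟨w', he, by rw [Q_def, peq_nilnil]; exact h1, ?_⟩
    rw [Q_def, peq_ne (by decide) hij]
    exact h2
  · rintro ⟨w', he, h1, h2⟩
    refine ⟨w', he, by rw [Q_def, peq_nilnil] at h1; exact h1, ?_⟩
    rw [Q_def, peq_ne (by decide) hij] at h2
    exact h2

lemma Q_zz_iff {i j : List Bool} (hij : ¬(i = [] ∧ j = [])) {w : M.W} :
    Q P M .z i .z j w ↔ ∃ w', M.E .x w w' ∧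
      Q P M .z i .x [] w' ∧ Q P M .z j .x [] w' := by
  rw [Q_def, peq_zz hij]
  simp only [KTr_ex, KTr_and]
  rw [peqDrev_eq_peq (by decide) i, peqDrev_eq_peq (by decide) j]
  exact Iff.rfl

/- ===================== one-step chain characterizations ===================== -/

lemma pform_eq_peq {u v : Var} (h : u ≠ v) (k : Bool) :
    pform P k u v = peq P u [k] v [] := by
  rw [← peqDrev_eq_peq h [k]]; rfl

lemma Qch_xz (k : Bool) {w : M.W} : Q P M .x [k] .z [] w ↔
    ∃ w', M.E .y w w' ∧ Q P M .y [] .z [] w' ∧ Q P M .x [k] .y [] w' := by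
  rw [Q_def, ← pform_eq_peq (by decide) k]
  show KTr M (.ex .y ((eqvF P .y .z).and (if k then P.p1 else P.p0))) w ↔ _
  simp only [KTr_ex, KTr_and]
  rw [← peq_nilnil (P := P) .y .z]
  have hb : (if k then P.p1 else P.p0) = peq P .x [k] .y [] := by
    rw [← pform_eq_peq (show Var.x ≠ Var.y by decide) k]; rfl
  rw [hb]
  exact Iff.rfl

lemma Qch_yz (k : Bool) {w : M.W} : Q P M .y [k] .z [] w ↔
    ∃ w', M.E .x w w' ∧ Q P M .x [] .y [] w' ∧ Q P M .x [k] .z [] w' := by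
  rw [Q_def, ← pform_eq_peq (by decide) k]
  show KTr M (.ex .x ((eqvF P .x .y).and (sXZ P (if k then P.p1 else P.p0)))) w ↔ _
  simp only [KTr_ex, KTr_and]
  rw [← peq_nilnil (P := P) .x .y]
  have : sXZ P (if k then P.p1 else P.p0) = peq P .x [k] .z [] := by
    rw [← pform_eq_peq (by decide) k]; rfl
  rw [this]
  exact Iff.rfl

lemma Qch_yx (k : Bool) {w : M.W} : Q P M .y [k] .x [] w ↔
    ∃ w', M.E .z w w' ∧ Q P M .x [] .z [] w' ∧ Q P M .y [k] .z [] w' := by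
  rw [Q_def, ← pform_eq_peq (by decide) k]
  show KTr M (.ex .z ((eqvF P .x .z).and (sYZ P (if k then P.p1 else P.p0)))) w ↔ _
  simp only [KTr_ex, KTr_and]
  rw [← peq_nilnil (P := P) .x .z]
  have : sYZ P (if k then P.p1 else P.p0) = peq P .y [k] .z [] := by
    rw [← pform_eq_peq (by decide) k]; rfl
  rw [this]
  exact Iff.rfl

lemma Qch_zx (k : Bool) {w : M.W} : Q P M .z [k] .x [] w ↔
    ∃ w', M.E .y w w' ∧ Q P M .y [] .z [] w' ∧ Q P M .y [k] .x [] w' := by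
  rw [Q_def, ← pform_eq_peq (by decide) k]
  show KTr M (.ex .y ((eqvF P .y .z).and (sYX P (if k then P.p1 else P.p0)))) w ↔ _
  simp only [KTr_ex, KTr_and]
  rw [← peq_nilnil (P := P) .y .z]
  have : sYX P (if k then P.p1 else P.p0) = peq P .y [k] .x [] := by
    rw [← pform_eq_peq (by decide) k]; rfl
  rw [this]
  exact Iff.rfl

lemma Qch_zy (k : Bool) {w : M.W} : Q P M .z [k] .y [] w ↔
    ∃ w', M.E .x w w' ∧ Q P M .x [] .z [] w' ∧ Q P M .x [k] .y [] w' := by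
  rw [Q_def, ← pform_eq_peq (by decide) k]
  show KTr M (.ex .x ((eqvF P .x .z).and (if k then P.p1 else P.p0))) w ↔ _
  simp only [KTr_ex, KTr_and]
  rw [← peq_nilnil (P := P) .x .z]
  have hb : (if k then P.p1 else P.p0) = peq P .x [k] .y [] := by
    rw [← pform_eq_peq (show Var.x ≠ Var.y by decide) k]; rfl
  rw [hb]
  exact Iff.rfl

end DraProof
namespace DraProof
open Fmd3

variable {P : Params} {M : KModel}

/-- (A4) as a move producer. -/
lemma axEm (C : Ctx P M) (u t : Var) (w : M.W) :
    ∃ w', M.E t w w' ∧ Q P M u [] t [] w' := axE C u t w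

lemma sym_nn (C : Ctx P M) {u v : Var} (h : u ≠ v) {i j : List Bool}
    (hi : i ≠ []) (hj : j ≠ []) {w : M.W} (hq : Q P M u i v j w) : Q P M v j u i w := by
  obtain ⟨w', he, h1, h2⟩ := (Q_split h hj).1 hq
  rw [Q_split (Ne.symm h) hi, third_comm]
  exact ⟨w', he, h2, h1⟩

lemma sym_right (C : Ctx P M) {u v : Var} (h : u ≠ v) {i : List Bool}
    (hi : i ≠ []) (hlen : i.length ≤ 3) {w : M.W}
    (hq : Q P M u i v [] w) : Q P M v [] u i w := by
  obtain ⟨w', he, hQ⟩ := axEm C v (third u v) w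
  have hq' := (Q_move C (third_ne h).1 (third_ne h).2 he).1 hq
  have h2 : Q P M u i (third u v) [] w' := axT C hlen (by simp) (by simp) hq' hQ
  rw [Q_split (Ne.symm h) hi, third_comm]
  exact ⟨w', he, hQ, h2⟩

lemma sym_left (C : Ctx P M) {u v : Var} (h : u ≠ v) {i : List Bool}
    (hi : i ≠ []) (hlen : i.length ≤ 3) {w : M.W}
    (hq : Q P M v [] u i w) : Q P M u i v [] w := by
  rw [Q_split (Ne.symm h) hi, third_comm] at hq
  obtain ⟨w', he, h1, h2⟩ := hq
  have h3 : Q P M (third u v) [] v [] w' := Q_sym_nilnil C h1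
  have h4 : Q P M u i v [] w' := axT C hlen (by simp) (by simp) h2 h3
  exact (Q_move C (third_ne h).1 (third_ne h).2 he).2 h4

/-- Retarget the right-hand anchor of a chain fact to the variable `t`. -/
lemma retarget (C : Ctx P M) {u v : Var} (h : u ≠ v) {t : Var} (ht : t ≠ u)
    {i : List Bool} (hlen : i.length ≤ 3) {w : M.W} (hq : Q P M u i v [] w) :
    ∃ w', M.E t w w' ∧ Q P M u i t [] w' := by
  by_cases htv : t = v
  · subst htv
    exact ⟨w, M.refl t w, hq⟩
  · obtain ⟨w', he, hQ⟩ := axEm C v t w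
    have hq' := (Q_move C ht (Ne.symm (fun hh => htv hh.symm)) he).1 hq
    exact ⟨w', he, axT C hlen (by simp) (by simp) hq' hQ⟩

/-- Existence, length 1: `u_k ≐ v → u_k ≐ u_k`. -/
lemma exist1 (C : Ctx P M) {u v : Var} (h : u ≠ v) {k : Bool} {w : M.W}
    (hq : Q P M u [k] v [] w) : Q P M u [k] u [k] w := by
  cases u with
  | z =>
    obtain ⟨w', he, h1⟩ := retarget C h (by decide) (by simp) hq (t := .x)
    exact (Q_move C (by decide) (by decide) he).2
      ((Q_zz_iff (by simp)).2 ⟨w', M.refl _ _, h1, h1⟩)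
  | x =>
    obtain ⟨w1, he1, h1⟩ := retarget C h (by decide) (by simp) hq (t := .z)
    obtain ⟨w2, he2, h2⟩ := axEm C .x .y w1
    have h1' := (Q_move C (by decide) (by decide) he2).1 h1
    have h3 : Q P M .y [k] .z [] w2 := (Qch_yz k).2 ⟨w2, M.refl _ _, h2, h1'⟩
    have h4 : Q P M .x [k] .y [k] w2 :=
      (Q_split (by decide) (by simp)).2 ⟨w2, M.refl _ _, h1', h3⟩
    have h5 : Q P M .x [k] .x [k] w1 := (Q_xx_iff (by simp)).2 ⟨w2, he2, h2, h4⟩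
    exact (Q_move C (by decide) (by decide) he1).2 h5
  | y =>
    obtain ⟨w1, he1, h1⟩ := retarget C h (by decide) (by simp) hq (t := .z)
    obtain ⟨w2, he2, h2, h3⟩ := (Qch_yz k).1 h1
    have h4 : Q P M .y [k] .z [] w2 := (Qch_yz k).2 ⟨w2, M.refl _ _, h2, h3⟩
    have h5 : Q P M .x [k] .y [k] w2 :=
      (Q_split (by decide) (by simp)).2 ⟨w2, M.refl _ _, h3, h4⟩
    have h6 : Q P M .y [k] .y [k] w1 := (Q_yy_iff (by simp)).2 ⟨w2, he2, h2, h5⟩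
    exact (Q_move C (by decide) (by decide) he1).2 h6

/-- Existence, length 1, general right index. -/
lemma exist1' (C : Ctx P M) {u v : Var} (h : u ≠ v) {k : Bool} {j : List Bool}
    (hj : j.length ≤ 3) {w : M.W} (hq : Q P M u [k] v j w) :
    Q P M u [k] u [k] w := by
  by_cases hjn : j = []
  · subst hjn; exact exist1 C h hq
  · obtain ⟨w', he, h1, _⟩ := (Q_split h hjn).1 hq
    have h2 := exist1 C (Ne.symm (third_ne h).1) h1
    exact (Q_move C (third_ne h).1 (third_ne h).1 he).2 h2

/-- Congruence, one step. -/
lemma CG1 (C : Ctx P M) {u v : Var} {j : List Bool} (hj : j.length ≤ 2) (k : Bool)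
    {w : M.W} (h1 : Q P M u [] v j w) (h2 : Q P M u [k] u [k] w) :
    Q P M u [k] v (j ++ [k]) w := by
  have := axC C (i := []) (j := j) (k := k) (by simp) hj h1 (by simpa using h2)
  simpa using this

/-- Existence transfer along `≐`. -/
lemma XTE (C : Ctx P M) {u v : Var} (h : u ≠ v) {k : Bool} {w : M.W}
    (h1 : Q P M u [] v [] w) (h2 : Q P M u [k] u [k] w) :
    Q P M v [k] v [k] w := by
  have h3 : Q P M u [k] v [k] w := CG1 C (by simp) k h1 h2
  exact exist1' C (Ne.symm h) (by simp) (sym_nn C h (by simp) (by simp) h3)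

/-- First-argument transfer, length 1. -/
lemma transfer1 (C : Ctx P M) {u v t : Var} (huv : u ≠ v) (hut : u ≠ t) (hvt : v ≠ t)
    {k : Bool} {w : M.W} (h1 : Q P M v [] u [] w) (h2 : Q P M u [k] t [] w) :
    Q P M v [k] t [] w := by
  have hD := exist1 C hut h2
  have h3 : Q P M u [k] v [k] w := CG1 C (by simp) k (Q_sym_nilnil C h1) hD
  exact axT C (by simp) (by simp) (by simp)
    (sym_nn C huv (by simp) (by simp) h3) h2

/-- Existence, length 2. -/
lemma exist2 (C : Ctx P M) {u v : Var} (h : u ≠ v) {k1 k2 : Bool} {w : M.W}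
    (hq : Q P M u [k1, k2] v [] w) : Q P M u [k1, k2] u [k1, k2] w := by
  have hi2 : ([k1, k2] : List Bool) = [k1] ++ [k2] := rfl
  cases u with
  | z =>
    obtain ⟨w', he, h1⟩ := retarget C h (by decide) (by simp) hq (t := .x)
    exact (Q_move C (by decide) (by decide) he).2
      ((Q_zz_iff (by simp)).2 ⟨w', M.refl _ _, h1, h1⟩)
  | y =>
    obtain ⟨w0, he0, R0⟩ := retarget C h (by decide) (by simp) hq (t := .x)
    rw [hi2] at R0
    obtain ⟨w1, he1, C1, C2⟩ := (Q_snoc (show Var.y ≠ Var.x by decide) (by simp) k2).1 R0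
    -- third y x = z
    have Dy1 := exist1 C (show Var.y ≠ Var.z by decide) C1
    have Dz2 := exist1 C (show Var.z ≠ Var.x by decide) C2
    have E1 := sym_right C (show Var.y ≠ Var.z by decide) (by simp) (by simp) C1
    have E3 : Q P M .z [k2] .y [k1, k2] w1 := CG1 C (by simp) k2 E1 Dz2
    obtain ⟨w2, he2, G⟩ := axEm C .y .x w1
    have E3' := (Q_move C (by decide) (by decide) he2).1 E3
    have Dy1' := (Q_move C (by decide) (by decide) he2).1 Dy1
    have Dz2' := (Q_move C (by decide) (by decide) he2).1 Dz2
    have E1' := (Q_move C (by decide) (by decide) he2).1 E1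
    have S : Q P M .y [k1] .x [k1] w2 := by
      have := CG1 C (show ([] : List Bool).length ≤ 2 by simp) k1 G Dy1'
      simpa using this
    have hZX : Q P M .z [] .x [k1] w2 := axT C (by simp) (by simp) (by simp) E1' S
    have E4 : Q P M .z [k2] .x [k1, k2] w2 := CG1 C (by simp) k2 hZX Dz2'
    have b6 := sym_nn C (show Var.z ≠ Var.x by decide) (by simp) (by simp) E4
    have b7 : Q P M .x [k1, k2] .y [k1, k2] w2 :=
      axT C (by simp) (by simp) (by simp) b6 E3'
    have b8 : Q P M .y [k1, k2] .y [k1, k2] w1 :=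
      (Q_yy_iff (by simp)).2 ⟨w2, he2, Q_sym_nilnil C G, b7⟩
    exact (Q_move C (by decide) (by decide) he0).2
      ((Q_move C (by decide) (by decide) he1).2 b8)
  | x =>
    obtain ⟨w0, he0, R0⟩ := retarget C h (by decide) (by simp) hq (t := .z)
    rw [hi2] at R0
    obtain ⟨w1, he1, C1, C2⟩ := (Q_snoc (show Var.x ≠ Var.z by decide) (by simp) k2).1 R0
    -- third x z = y
    have Dx1 := exist1 C (show Var.x ≠ Var.y by decide) C1
    have Dy2 := exist1 C (show Var.y ≠ Var.z by decide) C2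
    obtain ⟨w1', he1', H⟩ := axEm C .y .z w1
    have C1' := (Q_move C (by decide) (by decide) he1').1 C1
    have Dx1' := (Q_move C (by decide) (by decide) he1').1 Dx1
    have Dy2' := (Q_move C (by decide) (by decide) he1').1 Dy2
    have K1 : Q P M .x [k1] .z [] w1' := axT C (by simp) (by simp) (by simp) C1' H
    have E1z := sym_right C (show Var.x ≠ Var.z by decide) (by simp) (by simp) K1
    have DzK : Q P M .z [k2] .z [k2] w1' :=
      XTE C (show Var.y ≠ Var.z by decide) H Dy2'
    have E4 : Q P M .z [k2] .x [k1, k2] w1' := CG1 C (by simp) k2 E1z DzK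
    obtain ⟨w2, he2, G⟩ := axEm C .x .y w1'
    have E4' := (Q_move C (by decide) (by decide) he2).1 E4
    have DzK' := (Q_move C (by decide) (by decide) he2).1 DzK
    have Dx1'' := (Q_move C (by decide) (by decide) he2).1 Dx1'
    have E1z' := (Q_move C (by decide) (by decide) he2).1 E1z
    have S : Q P M .x [k1] .y [k1] w2 := by
      have := CG1 C (show ([] : List Bool).length ≤ 2 by simp) k1 G Dx1''
      simpa using this
    have hZY : Q P M .z [] .y [k1] w2 := axT C (by simp) (by simp) (by simp) E1z' S
    have E5 : Q P M .z [k2] .y [k1, k2] w2 := CG1 C (by simp) k2 hZY DzK'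
    have b6 := sym_nn C (show Var.z ≠ Var.x by decide) (by simp) (by simp) E4'
    have b7 : Q P M .x [k1, k2] .y [k1, k2] w2 :=
      axT C (by simp) (by simp) (by simp) b6 E5
    have b8 : Q P M .x [k1, k2] .x [k1, k2] w1' :=
      (Q_xx_iff (by simp)).2 ⟨w2, he2, G, b7⟩
    exact (Q_move C (by decide) (by decide) he0).2
      ((Q_move C (by decide) (by decide) he1).2
        ((Q_move C (by decide) (by decide) he1').2 b8))

end DraProof
namespace DraProof
open Fmd3

variable {P : Params} {M : KModel}

/-- Existence for the left index (distinct variables). -/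
lemma existL (C : Ctx P M) {u v : Var} (h : u ≠ v) {i j : List Bool}
    (hi : i ≠ []) (hil : i.length ≤ 2) (hjl : j.length ≤ 3) {w : M.W}
    (hq : Q P M u i v j w) : Q P M u i u i w := by
  match i, hi, hil with
  | [k], _, _ =>
    exact exist1' C h hjl hq
  | [k1, k2], _, _ =>
    by_cases hj : j = []
    · subst hj; exact exist2 C h hq
    · obtain ⟨w', he, h1, _⟩ := (Q_split h hj).1 hq
      have h2 := exist2 C (Ne.symm (third_ne h).1) h1
      exact (Q_move C (third_ne h).1 (third_ne h).1 he).2 h2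

/-- Existence for the right index (distinct variables). -/
lemma existR (C : Ctx P M) {u v : Var} (h : u ≠ v) {i j : List Bool}
    (hj : j ≠ []) (hjl : j.length ≤ 2) (hil : i.length ≤ 3) {w : M.W}
    (hq : Q P M u i v j w) : Q P M v j v j w := by
  by_cases hi : i = []
  · subst hi
    have h2 : Q P M v j u [] w := sym_left C (Ne.symm h) hj (le_trans hjl (by norm_num)) hq
    exact existL C (Ne.symm h) hj hjl (by simp) h2
  · exact existL C (Ne.symm h) hj hjl hil (sym_nn C h hi hj hq)

lemma Dprefix (C : Ctx P M) {u : Var} {k1 k2 : Bool} {w : M.W}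
    (hD : Q P M u [k1, k2] u [k1, k2] w) : Q P M u [k1] u [k1] w := by
  cases u with
  | x =>
    obtain ⟨w1, he1, _, h2⟩ := (Q_xx_iff (by simp)).1 hD
    obtain ⟨w2, he2, h3, _⟩ := (Q_split (show Var.x ≠ Var.y by decide) (by simp)).1 h2
    obtain ⟨w3, he3, h4, _⟩ :=
      (Q_snoc (show Var.x ≠ Var.z by decide) (by simp) k2).1 (show Q P M .x ([k1] ++ [k2]) .z [] w2 by simpa [third] using h3)
    have h5 := exist1 C (show Var.x ≠ Var.y by decide) h4
    exact (Q_move C (by decide) (by decide) he1).2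
      ((Q_move C (by decide) (by decide) he2).2
        ((Q_move C (by decide) (by decide) he3).2 h5))
  | y =>
    obtain ⟨w1, he1, _, h2⟩ := (Q_yy_iff (by simp)).1 hD
    obtain ⟨w2, he2, _, h4⟩ := (Q_split (show Var.x ≠ Var.y by decide) (by simp)).1 h2
    obtain ⟨w3, he3, h5, _⟩ :=
      (Q_snoc (show Var.y ≠ Var.z by decide) (by simp) k2).1 (show Q P M .y ([k1] ++ [k2]) .z [] w2 by simpa [third] using h4)
    have h6 := exist1 C (show Var.y ≠ Var.x by decide) h5
    exact (Q_move C (by decide) (by decide) he1).2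
      ((Q_move C (by decide) (by decide) he2).2
        ((Q_move C (by decide) (by decide) he3).2 h6))
  | z =>
    obtain ⟨w1, he1, h1, _⟩ := (Q_zz_iff (by simp)).1 hD
    obtain ⟨w2, he2, h2, _⟩ :=
      (Q_snoc (show Var.z ≠ Var.x by decide) (by simp) k2).1 (show Q P M .z ([k1] ++ [k2]) .x [] w1 by simpa using h1)
    have h3 := exist1 C (show Var.z ≠ Var.y by decide) h2
    exact (Q_move C (by decide) (by decide) he1).2
      ((Q_move C (by decide) (by decide) he2).2 h3)

/-- Existence transfer along `≐`, general length. -/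
lemma XTE2 (C : Ctx P M) {u v : Var} (h : u ≠ v) {i : List Bool} (hi : i ≠ [])
    (hil : i.length ≤ 2) {w : M.W} (h1 : Q P M u [] v [] w)
    (h2 : Q P M u i u i w) : Q P M v i v i w := by
  match i, hi, hil with
  | [k], _, _ => exact XTE C h h1 h2
  | [k1, k2], _, _ =>
    have hp := Dprefix C h2
    have S : Q P M u [k1] v [k1] w := CG1 C (by simp) k1 h1 hp
    have S2 : Q P M u [k1, k2] v [k1, k2] w := by
      have := axC C (i := [k1]) (j := [k1]) (k := k2) (by simp) (by simp) S
        (by simpa using h2)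
      simpa using this
    exact existR C h (by simp) (by simp) (by simp) S2

/-- Existence for diagonal facts, left index. -/
lemma existDL (C : Ctx P M) {u : Var} {i j : List Bool}
    (hi : i ≠ []) (hil : i.length ≤ 2) (hjl : j.length ≤ 3) {w : M.W}
    (hq : Q P M u i u j w) : Q P M u i u i w := by
  have hij : ¬(i = [] ∧ j = []) := by simp [hi]
  cases u with
  | x =>
    obtain ⟨w', he, hxy, h2⟩ := (Q_xx_iff hij).1 hq
    have h3 := existL C (show Var.x ≠ Var.y by decide) hi hil hjl h2
    exact (Q_move C (by decide) (by decide) he).2 h3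
  | y =>
    obtain ⟨w', he, hxy, h2⟩ := (Q_yy_iff hij).1 hq
    have h3 := existL C (show Var.x ≠ Var.y by decide) hi hil hjl h2
    have h4 := XTE2 C (show Var.x ≠ Var.y by decide) hi hil hxy h3
    exact (Q_move C (by decide) (by decide) he).2 h4
  | z =>
    obtain ⟨w', he, h1, _⟩ := (Q_zz_iff hij).1 hq
    have h3 := existL C (show Var.z ≠ Var.x by decide) hi hil (by simp) h1
    exact (Q_move C (by decide) (by decide) he).2 h3

/-- Existence for diagonal facts, right index. -/
lemma existDR (C : Ctx P M) {u : Var} {i j : List Bool}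
    (hj : j ≠ []) (hjl : j.length ≤ 2) (hil : i.length ≤ 3) {w : M.W}
    (hq : Q P M u i u j w) : Q P M u j u j w := by
  have hij : ¬(i = [] ∧ j = []) := by simp [hj]
  cases u with
  | x =>
    obtain ⟨w', he, hxy, h2⟩ := (Q_xx_iff hij).1 hq
    have h3 := existR C (show Var.x ≠ Var.y by decide) hj hjl hil h2
    have h4 := XTE2 C (show Var.y ≠ Var.x by decide) hj hjl (Q_sym_nilnil C hxy) h3
    exact (Q_move C (by decide) (by decide) he).2 h4
  | y =>
    obtain ⟨w', he, hxy, h2⟩ := (Q_yy_iff hij).1 hq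
    have h3 := existR C (show Var.x ≠ Var.y by decide) hj hjl hil h2
    exact (Q_move C (by decide) (by decide) he).2 h3
  | z =>
    obtain ⟨w', he, _, h1⟩ := (Q_zz_iff hij).1 hq
    have h3 := existL C (show Var.z ≠ Var.x by decide) hj hjl (by simp) h1
    exact (Q_move C (by decide) (by decide) he).2 h3

/-- Extract a copy of `u_i` into the slot `t`. -/
lemma copyD (C : Ctx P M) {u t : Var} (ht : t ≠ u) {i : List Bool} (hi : i ≠ [])
    (hil : i.length ≤ 2) {w : M.W} (hD : Q P M u i u i w) :
    ∃ w', M.E t w w' ∧ Q P M u i t [] w' := by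
  have hij : ¬(i = [] ∧ i = []) := by simp [hi]
  cases u with
  | x =>
    obtain ⟨w1, he1, hxy, h2⟩ := (Q_xx_iff hij).1 hD
    obtain ⟨w2, he2, h3, _⟩ := (Q_split (show Var.x ≠ Var.y by decide) hi).1 h2
    -- h3 : Q x i z [] at w2,  w ~y w1 ~z w2
    cases t with
    | x => exact absurd rfl ht
    | z =>
      obtain ⟨d, hd1, hd2⟩ := M.comm .y .z he1 he2
      exact ⟨d, hd1, (Q_move C (by decide) (by decide) hd2).2 h3⟩
    | y =>
      obtain ⟨w3, he3, h4⟩ := axEm C .z .y w2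
      have h5 : Q P M .x i .y [] w3 := axT C (le_trans hil (by norm_num)) (by simp) (by simp)
        ((Q_move C (by decide) (by decide) he3).1 h3) h4
      obtain ⟨d1, hd1, hd2⟩ := M.comm .z .y he2 he3
      have h6 := (Q_move C (by decide) (by decide) hd2).2 h5
      exact ⟨d1, M.trans .y he1 hd1, h6⟩
  | y =>
    obtain ⟨w1, he1, hxy, h2⟩ := (Q_yy_iff hij).1 hD
    obtain ⟨w2, he2, _, h4⟩ := (Q_split (show Var.x ≠ Var.y by decide) hi).1 h2
    -- h4 : Q y i z [] at w2, w ~x w1 ~z w2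
    cases t with
    | y => exact absurd rfl ht
    | z =>
      obtain ⟨d, hd1, hd2⟩ := M.comm .x .z he1 he2
      exact ⟨d, hd1, (Q_move C (by decide) (by decide) hd2).2 h4⟩
    | x =>
      obtain ⟨w3, he3, h5⟩ := axEm C .z .x w2
      have h6 : Q P M .y i .x [] w3 := axT C (le_trans hil (by norm_num)) (by simp) (by simp)
        ((Q_move C (by decide) (by decide) he3).1 h4) h5
      obtain ⟨d1, hd1, hd2⟩ := M.comm .z .x he2 he3
      have h7 := (Q_move C (by decide) (by decide) hd2).2 h6
      exact ⟨d1, M.trans .x he1 hd1, h7⟩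
  | z =>
    obtain ⟨w1, he1, h1, _⟩ := (Q_zz_iff hij).1 hD
    cases t with
    | z => exact absurd rfl ht
    | x => exact ⟨w1, he1, h1⟩
    | y =>
      obtain ⟨w2, he2, h2⟩ := axEm C .x .y w1
      have h3 : Q P M .z i .y [] w2 := axT C (le_trans hil (by norm_num)) (by simp) (by simp)
        ((Q_move C (by decide) (by decide) he2).1 h1) h2
      obtain ⟨d, hd1, hd2⟩ := M.comm .x .y he1 he2
      exact ⟨d, hd1, (Q_move C (by decide) (by decide) hd2).2 h3⟩

end DraProof
namespace DraProof
open Fmd3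

variable {P : Params} {M : KModel}

/- ===================== semantic unfoldings of the operations ===================== -/

lemma tr_appA {α : Fmd3} {u : Var} {i : List Bool} {w : M.W} :
    KTr M (appA P α u i) w ↔
      ∃ w', M.E .x w w' ∧ Q P M .x [] u i w' ∧ KTr M α w' := by
  show KTr M (.ex .x ((peq P .x [] u i).and α)) w ↔ _
  simp only [KTr_ex, KTr_and]
  exact Iff.rfl

lemma tr_compF {α β : Fmd3} {w : M.W} :
    KTr M (compF P α β) w ↔ ∃ w1, M.E .y w w1 ∧
      KTr M (appA P α .y [false]) w1 ∧ KTr M (appA P β .y [true]) w1 ∧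
      Q P M .x [false] .y [false, false] w1 ∧
      Q P M .y [false, true] .y [true, false] w1 ∧
      Q P M .y [true, true] .x [true] w1 := by
  show KTr M (.ex .y _) w ↔ _
  simp only [KTr_ex, KTr_and]
  constructor
  · rintro ⟨w1, he, h1, h2, h3, h4, h5⟩
    exact ⟨w1, he, h1, h2, h3, h4, h5⟩
  · rintro ⟨w1, he, h1, h2, h3, h4, h5⟩
    exact ⟨w1, he, h1, h2, h3, h4, h5⟩

lemma tr_convF {α : Fmd3} {w : M.W} :
    KTr M (convF P α) w ↔ ∃ w1, M.E .y w w1 ∧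
      KTr M (appA P α .y []) w1 ∧
      Q P M .y [false] .x [true] w1 ∧ Q P M .y [true] .x [false] w1 := by
  show KTr M (.ex .y _) w ↔ _
  simp only [KTr_ex, KTr_and]
  exact Iff.rfl

lemma tr_IdF {w : M.W} : KTr M (IdF P) w ↔ Q P M .x [false] .x [true] w := Iff.rfl

lemma p0_eq_peq : P.p0 = peq P .x [false] .y [] := by
  rw [← pform_eq_peq (show Var.x ≠ Var.y by decide) false]; rfl

lemma p1_eq_peq : P.p1 = peq P .x [true] .y [] := by
  rw [← pform_eq_peq (show Var.x ≠ Var.y by decide) true]; rfl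

lemma tr_pairF {w : M.W} : KTr M (pairF P) w ↔
    (∃ w', M.E .y w w' ∧ Q P M .x [false] .y [] w') ∧
    (∃ w', M.E .y w w' ∧ Q P M .x [true] .y [] w') := by
  show KTr M ((Fmd3.ex .y P.p0).and (.ex .y P.p1)) w ↔ _
  rw [KTr_and, KTr_ex, KTr_ex, p0_eq_peq, p1_eq_peq]
  exact Iff.rfl

/- ===================== free variables of the operations ===================== -/

lemma subset_pair_of_singleton {s : Finset Var} {a b : Var} (h : s ⊆ {a}) : s ⊆ {a, b} :=
  h.trans (by intro t ht; simp at ht; simp [ht])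

lemma fv_appA_y (hG : GoodParams P) {α : Fmd3} (hα : α.OneFree) (i : List Bool) :
    (appA P α .y i).freeVars ⊆ {Var.y} := by
  show (((peq P .x [] .y i).freeVars ∪ α.freeVars).erase .x) ⊆ {Var.y}
  intro a ha
  simp only [Finset.mem_erase, Finset.mem_union] at ha
  obtain ⟨hne, hmem⟩ := ha
  rcases hmem with h | h
  · have := fv_peq hG .x .y [] i (by simp) h
    simp only [Finset.mem_insert, Finset.mem_singleton] at this ⊢
    tauto
  · have := hα h
    simp only [Finset.mem_singleton] at this
    exact absurd this hne

lemma fv_compF (hG : GoodParams P) {α β : Fmd3} (hα : α.OneFree) (hβ : β.OneFree) :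
    (compF P α β).OneFree := by
  intro a ha
  show a ∈ ({Var.x} : Finset Var)
  simp only [compF, fv_ex, fv_and, Finset.mem_erase, Finset.mem_union] at ha
  obtain ⟨hne, hmem⟩ := ha
  have e1 := fv_appA_y hG hα [false]
  have e2 := fv_appA_y hG hβ [true]
  have e3 := fv_peq hG .x .y [false] [false, false] (by simp)
  have e4 := fv_peq hG .y .y [false, true] [true, false] (by simp)
  have e5 := fv_peq hG .y .x [true, true] [true] (by simp)
  simp only [Finset.mem_singleton]
  rcases hmem with h | h | h | h | h
  · exact absurd (by simpa using e1 h) hne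
  · exact absurd (by simpa using e2 h) hne
  · have := e3 h; simp only [Finset.mem_insert, Finset.mem_singleton] at this; tauto
  · have := e4 h; simp only [Finset.mem_insert, Finset.mem_singleton] at this; tauto
  · have := e5 h; simp only [Finset.mem_insert, Finset.mem_singleton] at this; tauto

lemma fv_convF (hG : GoodParams P) {α : Fmd3} (hα : α.OneFree) :
    (convF P α).OneFree := by
  intro a ha
  show a ∈ ({Var.x} : Finset Var)
  simp only [convF, fv_ex, fv_and, Finset.mem_erase, Finset.mem_union] at ha
  obtain ⟨hne, hmem⟩ := ha
  have e1 := fv_appA_y hG hα []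
  have e2 := fv_peq hG .y .x [false] [true] (by simp)
  have e3 := fv_peq hG .y .x [true] [false] (by simp)
  simp only [Finset.mem_singleton]
  rcases hmem with h | h | h
  · exact absurd (by simpa using e1 h) hne
  · have := e2 h; simp only [Finset.mem_insert, Finset.mem_singleton] at this; tauto
  · have := e3 h; simp only [Finset.mem_insert, Finset.mem_singleton] at this; tauto

lemma fv_IdF (hG : GoodParams P) : (IdF P).OneFree := by
  intro a ha
  have := fv_peq hG .x .x [false] [true] (by simp) ha
  simpa using this

lemma fv_pairF (hG : GoodParams P) : (pairF P).OneFree := by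
  intro a ha
  show a ∈ ({Var.x} : Finset Var)
  simp only [pairF, fv_and, fv_ex, Finset.mem_union, Finset.mem_erase] at ha
  rcases ha with ⟨hne, h⟩ | ⟨hne, h⟩
  · rw [hG.2.2.1] at h
    simp only [Finset.mem_insert, Finset.mem_singleton] at h
    simp only [Finset.mem_singleton]
    tauto
  · rw [hG.2.2.2] at h
    simp only [Finset.mem_insert, Finset.mem_singleton] at h
    simp only [Finset.mem_singleton]
    tauto

lemma fv_negc (hG : GoodParams P) {α : Fmd3} (hα : α.OneFree) :
    ((pairF P).and α.not).OneFree := by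
  intro a ha
  simp only [fv_and, fv_not, Finset.mem_union] at ha
  rcases ha with h | h
  · exact fv_pairF hG h
  · exact hα h

/-- Move a true formula along an `E`-step avoiding its free variables. -/
lemma move_fv {φ : Fmd3} {s : Finset Var} (hs : φ.freeVars ⊆ s) {v : Var} (hv : v ∉ s)
    {w w' : M.W} (he : M.E v w w') : KTr M φ w ↔ KTr M φ w' :=
  KTr_move (fun hc => hv (hs hc)) he

/-- x-local formulas are invariant under `y`- and `z`-moves. -/
lemma move_one {φ : Fmd3} (hφ : φ.OneFree) {v : Var} (hv : v ≠ .x) {w w' : M.W}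
    (he : M.E v w w') : KTr M φ w ↔ KTr M φ w' :=
  move_fv hφ (by simpa using hv) he

end DraProof
namespace DraProof
open Fmd3

variable {P : Params} {M : KModel}

/-- `θ → θ ∘ Id` for supported x-local `θ`. -/
lemma toRho (C : Ctx P M) {θ : Fmd3} (hθ : θ.OneFree) {w : M.W}
    (hT : KTr M θ w) (h0 : Q P M .x [false] .x [false] w)
    (h1 : Q P M .x [true] .x [true] w) :
    KTr M (compF P θ (IdF P)) w := by
  -- build d := (a₁, a₁) in z
  obtain ⟨w_d, hed, Pd0, Pd1⟩ :=
    axP C (t := .z) (by decide) (by decide) (by simp) (by simp) h1 h1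
  have hT_d := (move_one hθ (by decide) hed).1 hT
  have h0d := (Q_move C (by decide) (by decide) hed).1 h0
  have h1d := (Q_move C (by decide) (by decide) hed).1 h1
  have diagZ : Q P M .z [false] .z [true] w_d :=
    axT C (by simp) (by simp) (by simp) Pd0
      (sym_nn C (by decide) (by simp) (by simp) Pd1)
  have Dz0 := exist1' C (show Var.z ≠ Var.x by decide) (by simp) Pd0
  have Dz1 := exist1' C (show Var.z ≠ Var.x by decide) (by simp) Pd1
  -- build p := (a, d) in y
  obtain ⟨w_p, hep, Pp0, Pp1⟩ :=
    axP C (t := .y) (u := .x) (v := .z) (i := []) (j := [])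
      (by decide) (by decide) (by simp) (by simp) Q_diag_nilnil Q_diag_nilnil
  have Pd0p := (Q_move C (by decide) (by decide) hep).1 Pd0
  have Pd1p := (Q_move C (by decide) (by decide) hep).1 Pd1
  have diagZp := (Q_move C (by decide) (by decide) hep).1 diagZ
  have Dz0p := (Q_move C (by decide) (by decide) hep).1 Dz0
  have Dz1p := (Q_move C (by decide) (by decide) hep).1 Dz1
  have hTp := (move_one hθ (by decide) hep).1 hT_d
  have h0p := (Q_move C (by decide) (by decide) hep).1 h0d
  have h1p := (Q_move C (by decide) (by decide) hep).1 h1d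
  have hxy0 : Q P M .x [] .y [false] w_p :=
    sym_right C (show Var.y ≠ Var.x by decide) (by simp) (by simp) Pp0
  have A0 : KTr M (appA P θ .y [false]) w_p :=
    tr_appA.2 ⟨w_p, M.refl _ _, hxy0, hTp⟩
  have C1 : Q P M .x [false] .y [false, false] w_p := by
    have := CG1 C (by simp) false hxy0 h0p
    simpa using this
  have hzy1 : Q P M .z [] .y [true] w_p :=
    sym_right C (show Var.y ≠ Var.z by decide) (by simp) (by simp) Pp1
  have c3a : Q P M .z [true] .y [true, true] w_p := by
    have := CG1 C (by simp) true hzy1 Dz1p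
    simpa using this
  have C3 : Q P M .y [true, true] .x [true] w_p :=
    axT C (by simp) (by simp) (by simp)
      (sym_nn C (by decide) (by simp) (by simp) c3a) Pd1p
  have c2a : Q P M .x [true] .y [false, true] w_p := by
    have := CG1 C (by simp) true hxy0 h1p
    simpa using this
  have c2b : Q P M .z [false] .y [true, false] w_p := by
    have := CG1 C (by simp) false hzy1 Dz0p
    simpa using this
  have c2e : Q P M .y [false, true] .z [false] w_p :=
    axT C (by simp) (by simp) (by simp)
      (sym_nn C (by decide) (by simp) (by simp) c2a)
      (sym_nn C (by decide) (by simp) (by simp) Pd0p)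
  have C2 : Q P M .y [false, true] .y [true, false] w_p :=
    axT C (by simp) (by simp) (by simp) c2e c2b
  -- the Id part
  obtain ⟨wI, heI, HI⟩ := axEm C .z .x w_p
  have Pp1I := (Q_move C (by decide) (by decide) heI).1 Pp1
  have diagZI := (Q_move C (by decide) (by decide) heI).1 diagZp
  have Dz0I := (Q_move C (by decide) (by decide) heI).1 Dz0p
  have Dz1I := (Q_move C (by decide) (by decide) heI).1 Dz1p
  have hxy1 : Q P M .x [] .y [true] wI :=
    axT C (by simp) (by simp) (by simp) (Q_sym_nilnil C HI)
      (sym_right C (show Var.y ≠ Var.z by decide) (by simp) (by simp) Pp1I)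
  have g0 : Q P M .z [false] .x [false] wI := by
    have := CG1 C (by simp) false HI Dz0I
    simpa using this
  have g1 : Q P M .z [true] .x [true] wI := by
    have := CG1 C (by simp) true HI Dz1I
    simpa using this
  have idI : Q P M .x [false] .x [true] wI :=
    axT C (by simp) (by simp) (by simp)
      (axT C (by simp) (by simp) (by simp)
        (sym_nn C (by decide) (by simp) (by simp) g0) diagZI) g1
  have A1' : KTr M (appA P (IdF P) .y [true]) w_p :=
    tr_appA.2 ⟨wI, heI, hxy1, idI⟩
  -- recombine
  obtain ⟨wH, hH1, hH2⟩ := M.comm .z .y hed hep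
  refine tr_compF.2 ⟨wH, hH1, ?_, ?_, ?_, ?_, ?_⟩
  · exact (move_fv (fv_appA_y C.gp hθ [false]) (by simp) hH2).2 A0
  · exact (move_fv (fv_appA_y C.gp (fv_IdF C.gp) [true]) (by simp) hH2).2 A1'
  · exact (Q_move C (by decide) (by decide) hH2).2 C1
  · exact (Q_move C (by decide) (by decide) hH2).2 C2
  · exact (Q_move C (by decide) (by decide) hH2).2 C3

/-- The canonical configuration extracted from `θ ∘ Id`. -/
def SigP (P : Params) (M : KModel) (θ : Fmd3) (w : M.W) : Prop :=
  ∃ wB wC w4, M.E .z w wB ∧ M.E .y wB wC ∧ M.E .x wC w4 ∧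
    KTr M θ w4 ∧ Q P M .x [] .y [] w4 ∧
    Q P M .x [false] .z [false] w4 ∧ Q P M .x [true] .z [true] w4 ∧
    Q P M .y [false] .z [false] wC ∧ Q P M .y [true] .z [true] wC ∧
    Q P M .z [false] .x [false] wB ∧ Q P M .z [true] .x [true] wB

lemma rho_to_SigP (C : Ctx P M) {θ : Fmd3} (hθ : θ.OneFree) {w : M.W}
    (h : KTr M (compF P θ (IdF P)) w) : SigP P M θ w := by
  obtain ⟨w1, he1, A0, A1', C1, C2, C3⟩ := tr_compF.1 h
  -- existence facts at w1
  have DY00 : Q P M .y [false, false] .y [false, false] w1 :=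
    existR C (show Var.x ≠ Var.y by decide) (by simp) (by simp) (by simp) C1
  have DY01 := existDL C (by simp) (by simp) (by simp) C2
  have DY10 := existDR C (by simp) (by simp) (by simp) C2
  have DY11 := existL C (show Var.y ≠ Var.x by decide) (by simp) (by simp) (by simp) C3
  -- unfold the θ-carrier
  obtain ⟨w2, he2, F, Tθ2⟩ := tr_appA.1 A0
  have DY00' := (Q_move C (by decide) (by decide) he2).1 DY00
  have DY01' := (Q_move C (by decide) (by decide) he2).1 DY01
  have DY10' := (Q_move C (by decide) (by decide) he2).1 DY10
  have DY11' := (Q_move C (by decide) (by decide) he2).1 DY11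
  have C2' := (Q_move C (by decide) (by decide) he2).1 C2
  have A1'2 := (move_fv (fv_appA_y C.gp (fv_IdF C.gp) [true]) (by simp) he2).1 A1'
  have Fs : Q P M .y [false] .x [] w2 :=
    sym_left C (show Var.y ≠ Var.x by decide) (by simp) (by simp) F
  have R1 : Q P M .y [false, false] .x [false] w2 := by
    have := axC C (i := [false]) (j := ([] : List Bool)) (k := false)
      (by simp) (by simp) Fs (by simpa using DY00')
    simpa using this
  have DX0c : Q P M .x [false] .x [false] w2 :=
    existR C (show Var.y ≠ Var.x by decide) (by simp) (by simp) (by simp) R1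
  have R2 : Q P M .y [false, true] .x [true] w2 := by
    have := axC C (i := [false]) (j := ([] : List Bool)) (k := true)
      (by simp) (by simp) Fs (by simpa using DY01')
    simpa using this
  have DX1c : Q P M .x [true] .x [true] w2 :=
    existR C (show Var.y ≠ Var.x by decide) (by simp) (by simp) (by simp) R2
  -- move z to a copy of the carrier
  obtain ⟨w3, he3, H⟩ := axEm C .x .z w2
  have F' := (Q_move C (by decide) (by decide) he3).1 F
  have Tθ3 := (move_one hθ (by decide) he3).1 Tθ2
  have DX0c' := (Q_move C (by decide) (by decide) he3).1 DX0c
  have DX1c' := (Q_move C (by decide) (by decide) he3).1 DX1c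
  have J : Q P M .z [] .y [false] w3 :=
    axT C (by simp) (by simp) (by simp) (Q_sym_nilnil C H) F'
  -- move y to a copy of the carrier
  obtain ⟨w4, he4, G⟩ := axEm C .x .y w3
  have H' := (Q_move C (by decide) (by decide) he4).1 H
  have Tθ4 := (move_one hθ (by decide) he4).1 Tθ3
  have DX0c'' := (Q_move C (by decide) (by decide) he4).1 DX0c'
  have DX1c'' := (Q_move C (by decide) (by decide) he4).1 DX1c'
  have X1 : Q P M .x [false] .z [false] w4 := by
    have := CG1 C (by simp) false H' DX0c''
    simpa using this
  have X2 : Q P M .x [true] .z [true] w4 := by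
    have := CG1 C (by simp) true H' DX1c''
    simpa using this
  have Dz0 := XTE C (show Var.x ≠ Var.z by decide) H' DX0c''
  have Dz1 := XTE C (show Var.x ≠ Var.z by decide) H' DX1c''
  have hzy : Q P M .z [] .y [] w4 :=
    axT C (by simp) (by simp) (by simp) (Q_sym_nilnil C H') G
  have I1 : Q P M .y [false] .z [false] w4 := by
    have := CG1 C (by simp) false hzy Dz0
    exact sym_nn C (by decide) (by simp) (by simp) (by simpa using this)
  have I2 : Q P M .y [true] .z [true] w4 := by
    have := CG1 C (by simp) true hzy Dz1
    exact sym_nn C (by decide) (by simp) (by simp) (by simpa using this)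
  -- canonicalize the worlds
  obtain ⟨wB', hB'1, hB'2⟩ := M.comm .x .z he2 he3
  obtain ⟨wB, hB1, hB2⟩ := M.comm .y .z he1 hB'1
  obtain ⟨wC, hC1, hC2⟩ := M.comm .x .y hB'2 he4
  have hBC : M.E .y wB wC := M.trans .y hB2 hC1
  have I1C := (Q_move C (by decide) (by decide) hC2).2 I1
  have I2C := (Q_move C (by decide) (by decide) hC2).2 I2
  -- the O-facts at wB'
  have C1B := (Q_move C (by decide) (by decide) hB'1).1 C1
  have C2B := (Q_move C (by decide) (by decide) hB'1).1 C2
  have C3B := (Q_move C (by decide) (by decide) hB'1).1 C3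
  have DY00B := (Q_move C (by decide) (by decide) hB'1).1 DY00
  have DY01B := (Q_move C (by decide) (by decide) hB'1).1 DY01
  have DY10B := (Q_move C (by decide) (by decide) hB'1).1 DY10
  have DY11B := (Q_move C (by decide) (by decide) hB'1).1 DY11
  have A1'B := (move_fv (fv_appA_y C.gp (fv_IdF C.gp) [true]) (by simp) hB'1).1 A1'
  have JB := (Q_move C (by decide) (by decide) hB'2).2 J
  have JBs : Q P M .y [false] .z [] wB' :=
    sym_left C (show Var.y ≠ Var.z by decide) (by simp) (by simp) JB
  have o1 : Q P M .y [false, false] .z [false] wB' := by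
    have := axC C (i := [false]) (j := ([] : List Bool)) (k := false)
      (by simp) (by simp) JBs (by simpa using DY00B)
    simpa using this
  have O1 : Q P M .z [false] .x [false] wB' :=
    axT C (by simp) (by simp) (by simp)
      (sym_nn C (by decide) (by simp) (by simp) o1)
      (sym_nn C (by decide) (by simp) (by simp) C1B)
  have o2 : Q P M .y [false, true] .z [true] wB' := by
    have := axC C (i := [false]) (j := ([] : List Bool)) (k := true)
      (by simp) (by simp) JBs (by simpa using DY01B)
    simpa using this
  have o2' : Q P M .z [true] .y [true, false] wB' :=
    axT C (by simp) (by simp) (by simp)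
      (sym_nn C (by decide) (by simp) (by simp) o2) C2B
  -- the Id-pair fact
  obtain ⟨wI2, heI2, F2, ID⟩ := tr_appA.1 A1'B
  have ID' : Q P M .x [false] .x [true] wI2 := ID
  have DY10I := (Q_move C (by decide) (by decide) heI2).1 DY10B
  have DY11I := (Q_move C (by decide) (by decide) heI2).1 DY11B
  have f2s : Q P M .y [true] .x [] wI2 :=
    sym_left C (show Var.y ≠ Var.x by decide) (by simp) (by simp) F2
  have cd1 : Q P M .y [true, false] .x [false] wI2 := by
    have := axC C (i := [true]) (j := ([] : List Bool)) (k := false)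
      (by simp) (by simp) f2s (by simpa using DY10I)
    simpa using this
  have cd2 : Q P M .y [true, true] .x [true] wI2 := by
    have := axC C (i := [true]) (j := ([] : List Bool)) (k := true)
      (by simp) (by simp) f2s (by simpa using DY11I)
    simpa using this
  have CD : Q P M .y [true, false] .y [true, true] wI2 :=
    axT C (by simp) (by simp) (by simp)
      (axT C (by simp) (by simp) (by simp) cd1 ID')
      (sym_nn C (by decide) (by simp) (by simp) cd2)
  have CDB := (Q_move C (by decide) (by decide) heI2).2 CD
  have O2 : Q P M .z [true] .x [true] wB' :=
    axT C (by simp) (by simp) (by simp)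
      (axT C (by simp) (by simp) (by simp) o2' CDB) C3B
  have O1B := (Q_move C (by decide) (by decide) hB2).2 O1
  have O2B := (Q_move C (by decide) (by decide) hB2).2 O2
  exact ⟨wB, wC, w4, hB1, hBC, hC2, Tθ4, G, X1, X2, I1C, I2C, O1B, O2B⟩

end DraProof
namespace DraProof
open Fmd3

variable {P : Params} {M : KModel}

/-- The second component of a `∘Id` pair is an `Id`-pair: `p_10 ≐ p_11`. -/
lemma CD_of (C : Ctx P M) {w : M.W} (A1' : KTr M (appA P (IdF P) .y [true]) w)
    (DY10 : Q P M .y [true, false] .y [true, false] w)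
    (DY11 : Q P M .y [true, true] .y [true, true] w) :
    Q P M .y [true, false] .y [true, true] w := by
  obtain ⟨wI, heI, F2, ID⟩ := tr_appA.1 A1'
  have ID' : Q P M .x [false] .x [true] wI := ID
  have DY10I := (Q_move C (by decide) (by decide) heI).1 DY10
  have DY11I := (Q_move C (by decide) (by decide) heI).1 DY11
  have f2s : Q P M .y [true] .x [] wI :=
    sym_left C (show Var.y ≠ Var.x by decide) (by simp) (by simp) F2
  have cd1 : Q P M .y [true, false] .x [false] wI := by
    have := axC C (i := [true]) (j := ([] : List Bool)) (k := false)
      (by simp) (by simp) f2s (by simpa using DY10I)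
    simpa using this
  have cd2 : Q P M .y [true, true] .x [true] wI := by
    have := axC C (i := [true]) (j := ([] : List Bool)) (k := true)
      (by simp) (by simp) f2s (by simpa using DY11I)
    simpa using this
  have CD : Q P M .y [true, false] .y [true, true] wI :=
    axT C (by simp) (by simp) (by simp)
      (axT C (by simp) (by simp) (by simp) cd1 ID')
      (sym_nn C (by decide) (by simp) (by simp) cd2)
  exact (Q_move C (by decide) (by decide) heI).2 CD

/- ===================== support lemmas ===================== -/

lemma supp_Id (C : Ctx P M) {w : M.W} (h : KTr M (IdF P) w) :
    Q P M .x [false] .x [false] w ∧ Q P M .x [true] .x [true] w := by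
  have h' : Q P M .x [false] .x [true] w := h
  exact ⟨existDL C (by simp) (by simp) (by simp) h',
    existDR C (by simp) (by simp) (by simp) h'⟩

lemma supp_pair (C : Ctx P M) {w : M.W} (h : KTr M (pairF P) w) :
    Q P M .x [false] .x [false] w ∧ Q P M .x [true] .x [true] w := by
  obtain ⟨⟨w0, he0, hq0⟩, ⟨w1, he1, hq1⟩⟩ := tr_pairF.1 h
  constructor
  · exact (Q_move C (by decide) (by decide) he0).2
      (exist1 C (show Var.x ≠ Var.y by decide) hq0)
  · exact (Q_move C (by decide) (by decide) he1).2
      (exist1 C (show Var.x ≠ Var.y by decide) hq1)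

lemma supp_comp (C : Ctx P M) {α β : Fmd3} {w : M.W} (h : KTr M (compF P α β) w) :
    Q P M .x [false] .x [false] w ∧ Q P M .x [true] .x [true] w := by
  obtain ⟨w1, he1, _, _, C1, _, C3⟩ := tr_compF.1 h
  constructor
  · exact (Q_move C (by decide) (by decide) he1).2
      (existL C (show Var.x ≠ Var.y by decide) (by simp) (by simp) (by simp) C1)
  · exact (Q_move C (by decide) (by decide) he1).2
      (existR C (show Var.y ≠ Var.x by decide) (by simp) (by simp) (by simp) C3)

lemma supp_conv (C : Ctx P M) {α : Fmd3} {w : M.W} (h : KTr M (convF P α) w) :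
    Q P M .x [false] .x [false] w ∧ Q P M .x [true] .x [true] w := by
  obtain ⟨w1, he1, _, K2, K3⟩ := tr_convF.1 h
  constructor
  · exact (Q_move C (by decide) (by decide) he1).2
      (existR C (show Var.y ≠ Var.x by decide) (by simp) (by simp) (by simp) K3)
  · exact (Q_move C (by decide) (by decide) he1).2
      (existR C (show Var.y ≠ Var.x by decide) (by simp) (by simp) (by simp) K2)

/-- Projections of the base point exist, from the `SigP` data. -/
lemma SigP_DA (C : Ctx P M) {θ : Fmd3} {w : M.W} (h : SigP P M θ w) :
    Q P M .x [false] .x [false] w ∧ Q P M .x [true] .x [true] w := by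
  obtain ⟨wB, wC, w4, hB, hBC, hC, Tθ, G, X1, X2, I1, I2, O1, O2⟩ := h
  constructor
  · exact (Q_move C (by decide) (by decide) hB).2
      (existR C (show Var.z ≠ Var.x by decide) (by simp) (by simp) (by simp) O1)
  · exact (Q_move C (by decide) (by decide) hB).2
      (existR C (show Var.z ≠ Var.x by decide) (by simp) (by simp) (by simp) O2)

/- ===================== per-shape inverse lemmas ===================== -/

lemma SigP_Id (C : Ctx P M) {w : M.W} (h : SigP P M (IdF P) w) : KTr M (IdF P) w := by
  obtain ⟨wB, wC, w4, hB, hBC, hC, Tθ, G, X1, X2, I1, I2, O1, O2⟩ := h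
  have Tθ' : Q P M .x [false] .x [true] w4 := Tθ
  have zd : Q P M .z [false] .z [true] w4 :=
    axT C (by simp) (by simp) (by simp)
      (axT C (by simp) (by simp) (by simp)
        (sym_nn C (by decide) (by simp) (by simp) X1) Tθ') X2
  have zdB := (Q_move C (by decide) (by decide) hBC).2
    ((Q_move C (by decide) (by decide) hC).2 zd)
  have q1 : Q P M .x [false] .x [true] wB :=
    axT C (by simp) (by simp) (by simp)
      (axT C (by simp) (by simp) (by simp)
        (sym_nn C (by decide) (by simp) (by simp) O1) zdB) O2
  exact (Q_move C (by decide) (by decide) hB).2 q1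

lemma SigP_neg (C : Ctx P M) {ψ : Fmd3} (hψ : ψ.OneFree) {w : M.W}
    (h : SigP P M ((pairF P).and (compF P ψ (IdF P)).not) w) :
    KTr M ((pairF P).and (compF P ψ (IdF P)).not) w := by
  have hDA := SigP_DA C h
  obtain ⟨wB, wC, w4, hB, hBC, hC, Tθ, G, X1, X2, I1, I2, O1, O2⟩ := h
  rw [KTr_and] at Tθ ⊢
  constructor
  · -- pair at w
    rw [tr_pairF]
    obtain ⟨wa, hea, ha⟩ := copyD C (show Var.y ≠ Var.x by decide) (by simp) (by simp) hDA.1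
    obtain ⟨wb, heb, hb⟩ := copyD C (show Var.y ≠ Var.x by decide) (by simp) (by simp) hDA.2
    exact ⟨⟨wa, hea, ha⟩, ⟨wb, heb, hb⟩⟩
  · -- ¬ (ψ ∘ Id) at w
    rw [KTr_not]
    intro hρ
    have hρfree : (compF P ψ (IdF P)).OneFree := fv_compF C.gp hψ (fv_IdF C.gp)
    have hρC : KTr M (compF P ψ (IdF P)) wC :=
      (move_one hρfree (by decide) hBC).1 ((move_one hρfree (by decide) hB).1 hρ)
    obtain ⟨w1, he1, A0ψ, A1ψ, C1ψ, C2ψ, C3ψ⟩ := tr_compF.1 hρC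
    have O1C := (Q_move C (by decide) (by decide) hBC).1 O1
    have O2C := (Q_move C (by decide) (by decide) hBC).1 O2
    have O1'' := (Q_move C (by decide) (by decide) he1).1 O1C
    have O2'' := (Q_move C (by decide) (by decide) he1).1 O2C
    have ZC1 : Q P M .z [false] .y [false, false] w1 :=
      axT C (by simp) (by simp) (by simp) O1'' C1ψ
    have ZC3 : Q P M .y [true, true] .z [true] w1 :=
      axT C (by simp) (by simp) (by simp) C3ψ
        (sym_nn C (by decide) (by simp) (by simp) O2'')
    have DY10ψ := existDR C (by simp) (by simp) (by simp) C2ψ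
    have DY11ψ := existL C (show Var.y ≠ Var.x by decide) (by simp) (by simp) (by simp) C3ψ
    have CDψ := CD_of C A1ψ DY10ψ DY11ψ
    obtain ⟨wK, hK1, hK2⟩ := M.comm .y .x (M.symm .y he1) hC
    have A0K := (move_fv (fv_appA_y C.gp hψ [false]) (by simp) hK1).1 A0ψ
    have A1K := (move_fv (fv_appA_y C.gp (fv_IdF C.gp) [true]) (by simp) hK1).1 A1ψ
    have ZC1K := (Q_move C (by decide) (by decide) hK1).1 ZC1
    have ZC3K := (Q_move C (by decide) (by decide) hK1).1 ZC3
    have C2K := (Q_move C (by decide) (by decide) hK1).1 C2ψ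
    have X1K := (Q_move C (by decide) (by decide) hK2).2 X1
    have X2K := (Q_move C (by decide) (by decide) hK2).2 X2
    have C1n : Q P M .x [false] .y [false, false] wK :=
      axT C (by simp) (by simp) (by simp) X1K ZC1K
    have C3n : Q P M .y [true, true] .x [true] wK :=
      axT C (by simp) (by simp) (by simp) ZC3K
        (sym_nn C (by decide) (by simp) (by simp) X2K)
    have : KTr M (compF P ψ (IdF P)) w4 :=
      tr_compF.2 ⟨wK, M.symm .y hK2, A0K, A1K, C1n, C2K, C3n⟩
    exact (KTr_not.1 Tθ.2) this

lemma SigP_conv (C : Ctx P M) {α : Fmd3} (hα : α.OneFree) {w : M.W}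
    (h : SigP P M (convF P α) w) : KTr M (convF P α) w := by
  obtain ⟨wB, wC, w4, hB, hBC, hC, Tθ, G, X1, X2, I1, I2, O1, O2⟩ := h
  obtain ⟨wE, heE, J1, K2', K3'⟩ := tr_convF.1 Tθ
  have X1E := (Q_move C (by decide) (by decide) heE).1 X1
  have X2E := (Q_move C (by decide) (by decide) heE).1 X2
  have J2 : Q P M .y [false] .z [true] wE :=
    axT C (by simp) (by simp) (by simp) K2' X2E
  have J3 : Q P M .y [true] .z [false] wE :=
    axT C (by simp) (by simp) (by simp) K3' X1E
  obtain ⟨wF, hF1, hF2⟩ := M.comm .x .y hC heE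
  have J1F := (move_fv (fv_appA_y C.gp hα []) (by simp) hF2).2 J1
  have J2F := (Q_move C (by decide) (by decide) hF2).2 J2
  have J3F := (Q_move C (by decide) (by decide) hF2).2 J3
  have hBF : M.E .y wB wF := M.trans .y hBC hF1
  have O1F := (Q_move C (by decide) (by decide) hBF).1 O1
  have O2F := (Q_move C (by decide) (by decide) hBF).1 O2
  have K2 : Q P M .y [false] .x [true] wF :=
    axT C (by simp) (by simp) (by simp) J2F O2F
  have K3 : Q P M .y [true] .x [false] wF :=
    axT C (by simp) (by simp) (by simp) J3F O1F
  obtain ⟨wG, hG1, hG2⟩ := M.comm .z .y hB hBF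
  exact tr_convF.2 ⟨wG, hG1, (move_fv (fv_appA_y C.gp hα []) (by simp) hG2).2 J1F,
    (Q_move C (by decide) (by decide) hG2).2 K2,
    (Q_move C (by decide) (by decide) hG2).2 K3⟩

lemma SigP_comp (C : Ctx P M) {α β : Fmd3} (hα : α.OneFree) (hβ : β.OneFree) {w : M.W}
    (h : SigP P M (compF P α β) w) : KTr M (compF P α β) w := by
  obtain ⟨wB, wC, w4, hB, hBC, hC, Tθ, G, X1, X2, I1, I2, O1, O2⟩ := h
  obtain ⟨wE, heE, A0', A1'', c1', c2', c3'⟩ := tr_compF.1 Tθ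
  have X1E := (Q_move C (by decide) (by decide) heE).1 X1
  have X2E := (Q_move C (by decide) (by decide) heE).1 X2
  have ZC1 : Q P M .z [false] .y [false, false] wE :=
    axT C (by simp) (by simp) (by simp)
      (sym_nn C (by decide) (by simp) (by simp) X1E) c1'
  have ZC3 : Q P M .y [true, true] .z [true] wE :=
    axT C (by simp) (by simp) (by simp) c3' X2E
  obtain ⟨wF, hF1, hF2⟩ := M.comm .x .y hC heE
  have A0F := (move_fv (fv_appA_y C.gp hα [false]) (by simp) hF2).2 A0'
  have A1F := (move_fv (fv_appA_y C.gp hβ [true]) (by simp) hF2).2 A1''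
  have c2F := (Q_move C (by decide) (by decide) hF2).2 c2'
  have ZC1F := (Q_move C (by decide) (by decide) hF2).2 ZC1
  have ZC3F := (Q_move C (by decide) (by decide) hF2).2 ZC3
  have hBF : M.E .y wB wF := M.trans .y hBC hF1
  have O1F := (Q_move C (by decide) (by decide) hBF).1 O1
  have O2F := (Q_move C (by decide) (by decide) hBF).1 O2
  have C1n : Q P M .x [false] .y [false, false] wF :=
    axT C (by simp) (by simp) (by simp)
      (sym_nn C (by decide) (by simp) (by simp) O1F) ZC1F
  have C3n : Q P M .y [true, true] .x [true] wF :=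
    axT C (by simp) (by simp) (by simp) ZC3F O2F
  obtain ⟨wG, hG1, hG2⟩ := M.comm .z .y hB hBF
  exact tr_compF.2 ⟨wG, hG1,
    (move_fv (fv_appA_y C.gp hα [false]) (by simp) hG2).2 A0F,
    (move_fv (fv_appA_y C.gp hβ [true]) (by simp) hG2).2 A1F,
    (Q_move C (by decide) (by decide) hG2).2 C1n,
    (Q_move C (by decide) (by decide) hG2).2 c2F,
    (Q_move C (by decide) (by decide) hG2).2 C3n⟩

end DraProof
namespace DraProof
open Fmd3

variable {P : Params} {M : KModel}

lemma sem_of_prf (C : Ctx P M) {a : Fmd3} (h : Prf {AxF P} a) : ∀ w, KTr M a w := by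
  intro w
  refine soundness h M ?_ w
  intro ψ hψ w'
  rw [Set.mem_singleton_iff] at hψ
  rw [hψ]
  exact C.ax w'

lemma prf_of_sem (hG : GoodParams P) {a b : Fmd3}
    (h : ∀ (M : KModel) (C : Ctx P M) (w : M.W), KTr M a w ↔ KTr M b w) :
    Prf {AxF P} (a.iff b) := by
  refine completeness ?_
  intro M hT w
  have hC : Ctx P M := ⟨fun w' => hT (AxF P) rfl w', hG⟩
  exact KTr_iff.2 (h M hC w)

lemma tr_appA_or {α β : Fmd3} {u : Var} {i : List Bool} {w : M.W} :
    KTr M (appA P (α.or β) u i) w ↔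
      (KTr M (appA P α u i) w ∨ KTr M (appA P β u i) w) := by
  simp only [tr_appA, KTr_or]
  constructor
  · rintro ⟨w', he, hq, h | h⟩
    · exact Or.inl ⟨w', he, hq, h⟩
    · exact Or.inr ⟨w', he, hq, h⟩
  · rintro (⟨w', he, hq, h⟩ | ⟨w', he, hq, h⟩)
    · exact ⟨w', he, hq, Or.inl h⟩
    · exact ⟨w', he, hq, Or.inr h⟩

lemma tr_comp_or {α β γ : Fmd3} {w : M.W} :
    KTr M (compF P (α.or β) γ) w ↔
      (KTr M (compF P α γ) w ∨ KTr M (compF P β γ) w) := by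
  simp only [tr_compF]
  constructor
  · rintro ⟨w1, he, h0, h1, h2, h3, h4⟩
    rcases tr_appA_or.1 h0 with h | h
    · exact Or.inl ⟨w1, he, h, h1, h2, h3, h4⟩
    · exact Or.inr ⟨w1, he, h, h1, h2, h3, h4⟩
  · rintro (⟨w1, he, h0, h1, h2, h3, h4⟩ | ⟨w1, he, h0, h1, h2, h3, h4⟩)
    · exact ⟨w1, he, tr_appA_or.2 (Or.inl h0), h1, h2, h3, h4⟩
    · exact ⟨w1, he, tr_appA_or.2 (Or.inr h0), h1, h2, h3, h4⟩

lemma cong_appA {α α' : Fmd3} (h : ∀ w, KTr M α w ↔ KTr M α' w) {u : Var}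
    {i : List Bool} (w : M.W) :
    KTr M (appA P α u i) w ↔ KTr M (appA P α' u i) w := by
  simp only [tr_appA]
  constructor
  · rintro ⟨w', he, hq, hα⟩; exact ⟨w', he, hq, (h w').1 hα⟩
  · rintro ⟨w', he, hq, hα⟩; exact ⟨w', he, hq, (h w').2 hα⟩

lemma cong_compF {α α' β β' : Fmd3} (h1 : ∀ w, KTr M α w ↔ KTr M α' w)
    (h2 : ∀ w, KTr M β w ↔ KTr M β' w) (w : M.W) :
    KTr M (compF P α β) w ↔ KTr M (compF P α' β') w := by
  simp only [tr_compF]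
  constructor
  · rintro ⟨w1, he, a0, a1, c1, c2, c3⟩
    exact ⟨w1, he, (cong_appA h1 w1).1 a0, (cong_appA h2 w1).1 a1, c1, c2, c3⟩
  · rintro ⟨w1, he, a0, a1, c1, c2, c3⟩
    exact ⟨w1, he, (cong_appA h1 w1).2 a0, (cong_appA h2 w1).2 a1, c1, c2, c3⟩

lemma cong_convF {α α' : Fmd3} (h : ∀ w, KTr M α w ↔ KTr M α' w) (w : M.W) :
    KTr M (convF P α) w ↔ KTr M (convF P α') w := by
  simp only [tr_convF]
  constructor
  · rintro ⟨w1, he, a0, k2, k3⟩; exact ⟨w1, he, (cong_appA h w1).1 a0, k2, k3⟩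
  · rintro ⟨w1, he, a0, k2, k3⟩; exact ⟨w1, he, (cong_appA h w1).2 a0, k2, k3⟩

end DraProof

open DraProof Fmd3 in
theorem dra_is_an_algebra' (P : Params) (hP : GoodParams P) :
    IdF P ∈ dra P ∧
    (∀ φ ψ : Fmd3, φ ∈ dra P → ψ ∈ dra P → φ.or ψ ∈ dra P) ∧
    (∀ φ : Fmd3, φ ∈ dra P → negF P φ ∈ dra P) ∧
    (∀ φ ψ : Fmd3, φ ∈ dra P → ψ ∈ dra P → compF P φ ψ ∈ dra P) ∧
    (∀ φ : Fmd3, φ ∈ dra P → convF P φ ∈ dra P) := by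
  refine ⟨?_, ?_, ?_, ?_, ?_⟩
  · -- Id
    refine ⟨IdF P, fv_IdF hP, prf_of_sem hP ?_⟩
    intro M C w
    constructor
    · intro h
      exact toRho C (fv_IdF C.gp) h (supp_Id C h).1 (supp_Id C h).2
    · intro h
      exact SigP_Id C (rho_to_SigP C (fv_IdF C.gp) h)
  · -- or
    rintro φ φ' ⟨ψ1, h1f, h1p⟩ ⟨ψ2, h2f, h2p⟩
    refine ⟨ψ1.or ψ2, ?_, prf_of_sem hP ?_⟩
    · intro a ha
      rcases Finset.mem_union.1 ha with h | h
      · exact h1f h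
      · exact h2f h
    · intro M C w
      have hs1 : ∀ w, KTr M φ w ↔ KTr M (compF P ψ1 (IdF P)) w :=
        fun w => KTr_iff.1 (sem_of_prf C h1p w)
      have hs2 : ∀ w, KTr M φ' w ↔ KTr M (compF P ψ2 (IdF P)) w :=
        fun w => KTr_iff.1 (sem_of_prf C h2p w)
      rw [KTr_or, hs1 w, hs2 w, tr_comp_or]
  · -- neg
    rintro φ ⟨ψ, hf, hp⟩
    have hρf : (compF P ψ (IdF P)).OneFree := fv_compF hP hf (fv_IdF hP)
    refine ⟨(pairF P).and (compF P ψ (IdF P)).not, fv_negc hP hρf, prf_of_sem hP ?_⟩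
    intro M C w
    have hs : ∀ w, KTr M φ w ↔ KTr M (compF P ψ (IdF P)) w :=
      fun w => KTr_iff.1 (sem_of_prf C hp w)
    have key : ∀ w, KTr M (negF P φ) w ↔
        KTr M ((pairF P).and (compF P ψ (IdF P)).not) w := by
      intro w'
      show KTr M ((pairF P).and φ.not) w' ↔ _
      rw [KTr_and, KTr_and, KTr_not, KTr_not, hs w']
    rw [key w]
    constructor
    · intro h
      refine toRho C (fv_negc C.gp hρf) h ?_ ?_
      · exact (supp_pair C (KTr_and.1 h).1).1
      · exact (supp_pair C (KTr_and.1 h).1).2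
    · intro h
      exact SigP_neg C hf (rho_to_SigP C (fv_negc C.gp hρf) h)
  · -- comp
    rintro φ φ' ⟨ψ1, h1f, h1p⟩ ⟨ψ2, h2f, h2p⟩
    have hρ1 : (compF P ψ1 (IdF P)).OneFree := fv_compF hP h1f (fv_IdF hP)
    have hρ2 : (compF P ψ2 (IdF P)).OneFree := fv_compF hP h2f (fv_IdF hP)
    refine ⟨compF P (compF P ψ1 (IdF P)) (compF P ψ2 (IdF P)), fv_compF hP hρ1 hρ2,
      prf_of_sem hP ?_⟩
    intro M C w
    have hs1 : ∀ w, KTr M φ w ↔ KTr M (compF P ψ1 (IdF P)) w :=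
      fun w => KTr_iff.1 (sem_of_prf C h1p w)
    have hs2 : ∀ w, KTr M φ' w ↔ KTr M (compF P ψ2 (IdF P)) w :=
      fun w => KTr_iff.1 (sem_of_prf C h2p w)
    rw [cong_compF hs1 hs2 w]
    constructor
    · intro h
      exact toRho C (fv_compF C.gp hρ1 hρ2) h (supp_comp C h).1 (supp_comp C h).2
    · intro h
      exact SigP_comp C hρ1 hρ2 (rho_to_SigP C (fv_compF C.gp hρ1 hρ2) h)
  · -- conv
    rintro φ ⟨ψ, hf, hp⟩
    have hρf : (compF P ψ (IdF P)).OneFree := fv_compF hP hf (fv_IdF hP)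
    refine ⟨convF P (compF P ψ (IdF P)), fv_convF hP hρf, prf_of_sem hP ?_⟩
    intro M C w
    have hs : ∀ w, KTr M φ w ↔ KTr M (compF P ψ (IdF P)) w :=
      fun w => KTr_iff.1 (sem_of_prf C hp w)
    rw [cong_convF hs w]
    constructor
    · intro h
      exact toRho C (fv_convF C.gp hρf) h (supp_conv C h).1 (supp_conv C h).2
    · intro h
      exact SigP_conv C hρf (rho_to_SigP C (fv_convF C.gp hρf) h)

/-- **Theorem (Dra is an algebra).** For every choice of the parameter formulas,
the set `dra` contains `Id` and is closed under `+`, `−`, `∘` and `⌣`. -/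
theorem dra_is_an_algebra (P : Params) (hP : GoodParams P) :
    IdF P ∈ dra P ∧
    (∀ φ ψ : Fmd3, φ ∈ dra P → ψ ∈ dra P → φ.or ψ ∈ dra P) ∧
    (∀ φ : Fmd3, φ ∈ dra P → negF P φ ∈ dra P) ∧
    (∀ φ ψ : Fmd3, φ ∈ dra P → ψ ∈ dra P → compF P φ ψ ∈ dra P) ∧
    (∀ φ : Fmd3, φ ∈ dra P → convF P φ ∈ dra P) := dra_is_an_algebra' P hP
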